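/- arXiv:2505.11395 — 14 statements merged into one kernel-verified Lean document; each statement's English description precedes it below -/
import Mathlib

section
/- Let n ≥ 1 and let p_n be the projection minority operation on P_n = {0,…,n−1}. Then p_n preserves: (a) every unary relation X ⊆ P_n; (b) every relation G ⊆ P_n × P_n that is the graph of a bijection between two subsets of P_n (i.e., for every a there is at most one b with (a,b) ∈ G and for every b at most one a with (a,b) ∈ G); and (c) if n ≥ 2, the ternary relation L = {(x,y,z) ∈ {0,1}³ : x + y + z ≡ 1 (mod 2)}. -/
/-- The projection minority operation `p_n` on `Fin n`: the minority operation
returning its second argument on triples of pairwise distinct elements. -/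
def projMin {n : ℕ} (x y z : Fin n) : Fin n :=
  if x = y then z else if x = z then y else if y = z then x else y

/-- The ternary relation `L = {(x,y,z) ∈ {0,1}³ : x + y + z ≡ 1 (mod 2)}` on `Fin n`. -/
def parityRel (n : ℕ) : Set (Fin n × Fin n × Fin n) :=
  {t | t.1.val ≤ 1 ∧ t.2.1.val ≤ 1 ∧ t.2.2.val ≤ 1 ∧
        (t.1.val + t.2.1.val + t.2.2.val) % 2 = 1}

lemma projMin_cases {n : ℕ} (x y z : Fin n) :
    projMin x y z = x ∨ projMin x y z = y ∨ projMin x y z = z := by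
  unfold projMin
  split_ifs <;> tauto

lemma projMin_val {n : ℕ} (x y z : Fin n) (hx : x.val ≤ 1) (hy : y.val ≤ 1)
    (hz : z.val ≤ 1) :
    (projMin x y z).val = (x.val + y.val + z.val) % 2 := by
  unfold projMin
  split_ifs with h1 h2 h3
  · rw [Fin.ext_iff] at h1; omega
  · rw [Fin.ext_iff] at h2; omega
  · rw [Fin.ext_iff] at h3; omega
  · rw [Fin.ext_iff] at h1 h2 h3; omega

theorem stmt_0 (n : ℕ) (hn : 1 ≤ n) :
    (∀ X : Set (Fin n), ∀ x₁ x₂ x₃ : Fin n, x₁ ∈ X → x₂ ∈ X → x₃ ∈ X →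
        projMin x₁ x₂ x₃ ∈ X) ∧
    (∀ G : Set (Fin n × Fin n),
        (∀ a b b', (a, b) ∈ G → (a, b') ∈ G → b = b') →
        (∀ a a' b, (a, b) ∈ G → (a', b) ∈ G → a = a') →
        ∀ p q r, p ∈ G → q ∈ G → r ∈ G →
          (projMin p.1 q.1 r.1, projMin p.2 q.2 r.2) ∈ G) ∧
    (2 ≤ n → ∀ p q r, p ∈ parityRel n → q ∈ parityRel n → r ∈ parityRel n →
        (projMin p.1 q.1 r.1, projMin p.2.1 q.2.1 r.2.1,
          projMin p.2.2 q.2.2 r.2.2) ∈ parityRel n) := by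
  refine ⟨?_, ?_, ?_⟩
  · intro X x₁ x₂ x₃ h1 h2 h3
    rcases projMin_cases x₁ x₂ x₃ with h | h | h <;> rw [h] <;> assumption
  · intro G hinj hinj' p q r hp hq hr
    have hpq : p.1 = q.1 ↔ p.2 = q.2 := by
      constructor
      · intro h; exact hinj p.1 p.2 q.2 hp (by rw [h]; exact hq)
      · intro h; exact hinj' p.1 q.1 p.2 hp (by rw [h]; exact hq)
    have hpr : p.1 = r.1 ↔ p.2 = r.2 := by
      constructor
      · intro h; exact hinj p.1 p.2 r.2 hp (by rw [h]; exact hr)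
      · intro h; exact hinj' p.1 r.1 p.2 hp (by rw [h]; exact hr)
    have hqr : q.1 = r.1 ↔ q.2 = r.2 := by
      constructor
      · intro h; exact hinj q.1 q.2 r.2 hq (by rw [h]; exact hr)
      · intro h; exact hinj' q.1 r.1 q.2 hq (by rw [h]; exact hr)
    unfold projMin
    by_cases h1 : p.1 = q.1
    · simp only [h1, hpq.mp h1, if_pos rfl]; exact hr
    · rw [if_neg h1, if_neg (hpq.not.mp h1)]
      by_cases h2 : p.1 = r.1
      · rw [if_pos h2, if_pos (hpr.mp h2)]; exact hq
      · rw [if_neg h2, if_neg (hpr.not.mp h2)]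
        by_cases h3 : q.1 = r.1
        · rw [if_pos h3, if_pos (hqr.mp h3)]; exact hp
        · rw [if_neg h3, if_neg (hqr.not.mp h3)]; exact hq
  · intro _ p q r hp hq hr
    obtain ⟨hp1, hp2, hp3, hp4⟩ := hp
    obtain ⟨hq1, hq2, hq3, hq4⟩ := hq
    obtain ⟨hr1, hr2, hr3, hr4⟩ := hr
    have e1 := projMin_val p.1 q.1 r.1 hp1 hq1 hr1
    have e2 := projMin_val p.2.1 q.2.1 r.2.1 hp2 hq2 hr2
    have e3 := projMin_val p.2.2 q.2.2 r.2.2 hp3 hq3 hr3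
    simp only [parityRel, Set.mem_setOf_eq]
    exact ⟨by omega, by omega, by omega, by omega⟩
end

section
/- Let n ≥ 1 and let p_n be the projection minority operation on P_n = {0,…,n−1}. Then P_n is hereditarily simple with respect to p_n: for every subset B ⊆ P_n and every equivalence relation θ on B such that whenever (a₁,b₁), (a₂,b₂), (a₃,b₃) ∈ θ also (p_n(a₁,a₂,a₃), p_n(b₁,b₂,b₃)) ∈ θ, the relation θ is either the equality relation on B or the full relation B × B. -/
/-- `P_n` is hereditarily simple: every congruence of a subalgebra `B` is the
equality relation or the full relation on `B`. -/
theorem stmt_1 (n : ℕ) (hn : 1 ≤ n) (B : Set (Fin n)) (θ : Fin n → Fin n → Prop)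
    (hdom : ∀ a b, θ a b → a ∈ B ∧ b ∈ B)
    (hrefl : ∀ a ∈ B, θ a a)
    (hsymm : ∀ a b, θ a b → θ b a)
    (htrans : ∀ a b c, θ a b → θ b c → θ a c)
    (hpres : ∀ a₁ b₁ a₂ b₂ a₃ b₃, θ a₁ b₁ → θ a₂ b₂ → θ a₃ b₃ →
        θ (projMin a₁ a₂ a₃) (projMin b₁ b₂ b₃)) :
    (∀ a b, θ a b → a = b) ∨ (∀ a ∈ B, ∀ b ∈ B, θ a b) := by
  by_cases h : ∀ a b, θ a b → a = b
  · exact Or.inl h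
  · right
    push_neg at h
    obtain ⟨a, b, hab, hne⟩ := h
    have haB := (hdom a b hab).1
    have hbB := (hdom a b hab).2
    -- key: θ a c for all c ∈ B
    have key : ∀ c ∈ B, θ a c := by
      intro c hc
      by_cases hca : c = a
      · subst hca; exact hrefl c hc
      by_cases hcb : c = b
      · subst hcb; exact hab
      have := hpres c c a b b b (hrefl c hc) hab (hrefl b hbB)
      have e1 : projMin c a b = a := by
        simp [projMin, hca, hcb, hne]
      have e2 : projMin c b b = c := by
        simp [projMin, hcb]
      rw [e1, e2] at this
      exact this
    intro x hx y hy
    exact htrans x a y (hsymm a x (key x hx)) (key y hy)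
end

section
/- Let A be a finite set and let f : A³ → A be a conservative Maltsev operation. Then there exists a conservative minority operation g : A³ → A that lies in the clone generated by f; in particular, for every n ≥ 1, every relation R ⊆ Aⁿ preserved by f is also preserved by g. -/
/-- `f` is a Maltsev operation. -/
def IsMaltsevOp {α : Type*} (f : α → α → α → α) : Prop :=
  ∀ x y : α, f x x y = y ∧ f y x x = y

/-- `f` is a minority operation. -/
def IsMinorityOp {α : Type*} (f : α → α → α → α) : Prop :=
  ∀ x y : α, f x x y = y ∧ f x y x = y ∧ f y x x = y

/-- `f` is conservative. -/
def IsConservativeOp {α : Type*} (f : α → α → α → α) : Prop :=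
  ∀ x y z : α, f x y z = x ∨ f x y z = y ∨ f x y z = z

/-- `f` preserves the `n`-ary relation `R`. -/
def PreservesSet {α : Type*} (f : α → α → α → α) {n : ℕ}
    (R : Set (Fin n → α)) : Prop :=
  ∀ t₁ t₂ t₃, t₁ ∈ R → t₂ ∈ R → t₃ ∈ R →
    (fun i => f (t₁ i) (t₂ i) (t₃ i)) ∈ R

/-- Carbonnel's lemma: the clone of a conservative Maltsev operation on a finite
set contains a conservative minority operation.  (On a finite set, `g` lies in
the clone generated by `f` iff `g` preserves every finitary relation preserved
by `f`.) -/
theorem stmt_2 {α : Type*} [Fintype α] (f : α → α → α → α)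
    (hcons : IsConservativeOp f) (hmal : IsMaltsevOp f) :
    ∃ g : α → α → α → α, IsConservativeOp g ∧ IsMinorityOp g ∧
      ∀ (n : ℕ), 1 ≤ n → ∀ R : Set (Fin n → α),
        PreservesSet f R → PreservesSet g R := by
  refine ⟨fun a b c => f a (f a b (f b a b)) (f (f a b c) c (f b a c)), ?_, ?_, ?_⟩
  · -- conservative
    intro x y z
    have key : ∀ a b c : α, (a = x ∨ a = y ∨ a = z) → (b = x ∨ b = y ∨ b = z) →
        (c = x ∨ c = y ∨ c = z) → (f a b c = x ∨ f a b c = y ∨ f a b c = z) := by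
      intro a b c ha hb hc
      rcases hcons a b c with h | h | h <;> rw [h] <;> assumption
    apply key
    · tauto
    · exact key _ _ _ (by tauto) (by tauto) (key _ _ _ (by tauto) (by tauto) (by tauto))
    · exact key _ _ _ (key _ _ _ (by tauto) (by tauto) (by tauto)) (by tauto)
        (key _ _ _ (by tauto) (by tauto) (by tauto))
  · -- minority
    intro x y
    have e1 : f x x y = y := (hmal x y).1
    have e2 : f y x x = y := (hmal x y).2
    have e3 : f y y x = x := (hmal y x).1
    have e4 : f x y y = x := (hmal y x).2
    have e5 : f x x x = x := (hmal x x).1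
    have e6 : f y y y = y := (hmal y y).1
    have hp : f x y x = x ∨ f x y x = y := by
      rcases hcons x y x with h | h | h <;> tauto
    have hq : f y x y = x ∨ f y x y = y := by
      rcases hcons y x y with h | h | h <;> tauto
    rcases hp with hp | hp <;> rcases hq with hq | hq <;>
      refine ⟨?_, ?_, ?_⟩ <;> simp only [e1, e2, e3, e4, e5, e6, hp, hq]
  · -- preservation
    intro n _ R hR t₁ t₂ t₃ h1 h2 h3
    have A := hR t₂ t₁ t₂ h2 h1 h2
    have B := hR t₁ t₂ _ h1 h2 A
    have C := hR t₁ t₂ t₃ h1 h2 h3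
    have D := hR t₂ t₁ t₃ h2 h1 h3
    have E := hR _ t₃ _ C h3 D
    exact hR t₁ _ _ h1 B E
end

section
/- Let f : A³ → A be a conservative minority operation, let α be a congruence of (A;f), let B be an equivalence class of α, and let θ be an equivalence relation on B preserved by f (i.e., a congruence of the subalgebra (B;f)). Then for each b ∈ B, the relation θ_b := {(x,y) ∈ A² : x = y, or x ∈ [b]_θ and y ∈ [b]_θ} is a block congruence of (A;f). -/
/-- `f` preserves the binary relation `θ`. -/
def PreservesRel {α : Type*} (f : α → α → α → α) (θ : α → α → Prop) : Prop :=
  ∀ a₁ b₁ a₂ b₂ a₃ b₃ : α, θ a₁ b₁ → θ a₂ b₂ → θ a₃ b₃ →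
    θ (f a₁ a₂ a₃) (f b₁ b₂ b₃)

/-- A congruence of the algebra `(α; f)`. -/
def IsCong {α : Type*} (f : α → α → α → α) (θ : α → α → Prop) : Prop :=
  Equivalence θ ∧ PreservesRel f θ

/-- A block congruence: a congruence with at most one nontrivial class. -/
def IsBlockCong {α : Type*} (f : α → α → α → α) (θ : α → α → Prop) : Prop :=
  IsCong f θ ∧ ∀ a b c d : α, θ a b → a ≠ b → θ c d → c ≠ d → θ a c

/-- A relation is nontrivial if it relates two distinct elements. -/
def NontrivialRel {α : Type*} (θ : α → α → Prop) : Prop :=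
  ∃ a b, θ a b ∧ a ≠ b

/-- Containment of binary relations. -/
def RelLE {α : Type*} (θ₁ θ₂ : α → α → Prop) : Prop :=
  ∀ x y, θ₁ x y → θ₂ x y

/-- An atomic congruence: a nontrivial congruence such that every nontrivial
congruence contained in it equals it. -/
def IsAtomicCong {α : Type*} (f : α → α → α → α) (θ : α → α → Prop) : Prop :=
  IsCong f θ ∧ NontrivialRel θ ∧
    ∀ θ' : α → α → Prop, IsCong f θ' → NontrivialRel θ' → RelLE θ' θ →
      ∀ x y, θ' x y ↔ θ x y

/-- `(α; f)` is subdirectly irreducible: it has exactly one atomic congruence. -/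
def IsSubdirectlyIrred {α : Type*} (f : α → α → α → α) : Prop :=
  ∃ θ : α → α → Prop, IsAtomicCong f θ ∧
    ∀ θ' : α → α → Prop, IsAtomicCong f θ' → ∀ x y, θ' x y ↔ θ x y

/-- Key lemma: changing the first coordinate within the `θ`-class of `b`
moves the value of `f` either not at all, or within the `θ`-class of `b`. -/
theorem key_lemma {α : Type*} (f : α → α → α → α)
    (hcons : IsConservativeOp f) (hmin : IsMinorityOp f)
    (alpha : α → α → Prop) (halpha : IsCong f alpha)
    (B : Set α) (hB : ∃ a₀, B = {x | alpha a₀ x})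
    (θ : α → α → Prop)
    (hdom : ∀ x y, θ x y → x ∈ B ∧ y ∈ B)
    (hrefl : ∀ x ∈ B, θ x x)
    (hsymm : ∀ x y, θ x y → θ y x)
    (htrans : ∀ x y z, θ x y → θ y z → θ x z)
    (hpres : PreservesRel f θ)
    (b a a' x y : α) (ha : θ b a) (ha' : θ b a') :
    f a x y = f a' x y ∨ (θ b (f a x y) ∧ θ b (f a' x y)) := by
  obtain ⟨a₀, rfl⟩ := hB
  obtain ⟨hE, hP⟩ := halpha
  have aB : alpha a₀ a := (hdom b a ha).2
  have a'B : alpha a₀ a' := (hdom b a' ha').2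
  have haa' : alpha a a' := hE.trans (hE.symm aB) a'B
  have θaa' : θ a a' := htrans a b a' (hsymm b a ha) ha'
  have huv : alpha (f a x y) (f a' x y) := hP a a' x x y y haa' (hE.refl x) (hE.refl y)
  rcases hcons a x y with hu | hu | hu <;> rcases hcons a' x y with hv | hv | hv
  · -- u = a, v = a'
    right; rw [hu, hv]; exact ⟨ha, ha'⟩
  · -- u = a, v = x
    rw [hu, hv] at huv   -- alpha a x
    have xB : alpha a₀ x := hE.trans aB huv
    have hyy : alpha (f a x y) (f x x y) := hP a x x x y y huv (hE.refl x) (hE.refl y)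
    rw [hu, (hmin x y).1] at hyy  -- alpha a y
    have yB : alpha a₀ y := hE.trans aB hyy
    have hθ := hpres a a' x x y y θaa' (hrefl x xB) (hrefl y yB)
    rw [hu, hv] at hθ  -- θ a x
    right; rw [hu, hv]; exact ⟨ha, htrans b a x ha hθ⟩
  · -- u = a, v = y
    rw [hu, hv] at huv  -- alpha a y
    have yB : alpha a₀ y := hE.trans aB huv
    have hax : alpha (f a x y) (f y x y) := hP a y x x y y huv (hE.refl x) (hE.refl y)
    rw [hu, (hmin y x).2.1] at hax  -- alpha a x
    have xB : alpha a₀ x := hE.trans aB hax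
    have hθ := hpres a a' x x y y θaa' (hrefl x xB) (hrefl y yB)
    rw [hu, hv] at hθ  -- θ a y
    right; rw [hu, hv]; exact ⟨ha, htrans b a y ha hθ⟩
  · -- u = x, v = a'
    rw [hu, hv] at huv  -- alpha x a'
    have xB : alpha a₀ x := hE.trans a'B (hE.symm huv)
    have hax : alpha a x := hE.trans (hE.symm aB) xB
    have hxy : alpha (f a x y) (f x x y) := hP a x x x y y hax (hE.refl x) (hE.refl y)
    rw [hu, (hmin x y).1] at hxy  -- alpha x y
    have yB : alpha a₀ y := hE.trans xB hxy
    have hθ := hpres a a' x x y y θaa' (hrefl x xB) (hrefl y yB)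
    rw [hu, hv] at hθ  -- θ x a'
    right; rw [hu, hv]; exact ⟨htrans b a' x ha' (hsymm x a' hθ), ha'⟩
  · -- u = x, v = x
    left; rw [hu, hv]
  · -- u = x, v = y
    rw [hu, hv] at huv  -- alpha x y
    have h1 : alpha (f a x y) (f a' y y) := hP a a' x y y y haa' huv (hE.refl y)
    rw [hu, (hmin y a').2.2] at h1  -- alpha x a'
    have xB : alpha a₀ x := hE.trans a'B (hE.symm h1)
    have yB : alpha a₀ y := hE.trans xB huv
    have hθxy := hpres a a' x x y y θaa' (hrefl x xB) (hrefl y yB)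
    rw [hu, hv] at hθxy -- θ x y
    have hθay := hpres a a' x x x y θaa' (hrefl x xB) hθxy
    rw [(hmin x a).2.2, hv] at hθay  -- θ a y
    have hθxa' := hpres a a' x y y y θaa' hθxy (hrefl y yB)
    rw [hu, (hmin y a').2.2] at hθxa'  -- θ x a'
    right; rw [hu, hv]
    exact ⟨htrans b a' x ha' (hsymm x a' hθxa'), htrans b a y ha hθay⟩
  · -- u = y, v = a'
    rw [hu, hv] at huv  -- alpha y a'
    have yB : alpha a₀ y := hE.trans a'B (hE.symm huv)
    have ha'y : alpha a' y := hE.symm huv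
    have h1 : alpha (f a' x y) (f y x y) := hP a' y x x y y ha'y (hE.refl x) (hE.refl y)
    rw [hv, (hmin y x).2.1] at h1  -- alpha a' x
    have xB : alpha a₀ x := hE.trans a'B h1
    have hθ := hpres a a' x x y y θaa' (hrefl x xB) (hrefl y yB)
    rw [hu, hv] at hθ  -- θ y a'
    right; rw [hu, hv]; exact ⟨htrans b a' y ha' (hsymm y a' hθ), ha'⟩
  · -- u = y, v = x
    rw [hu, hv] at huv  -- alpha y x
    have h1 : alpha (f a x y) (f a' x x) :=
      hP a a' x x y x haa' (hE.refl x) huv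
    rw [hu, (hmin x a').2.2] at h1  -- alpha y a'
    have yB : alpha a₀ y := hE.trans a'B (hE.symm h1)
    have xB : alpha a₀ x := hE.trans yB huv
    have hθyx := hpres a a' x x y y θaa' (hrefl x xB) (hrefl y yB)
    rw [hu, hv] at hθyx  -- θ y x
    have hθya' := hpres a a' x x y x θaa' (hrefl x xB) hθyx
    rw [hu, (hmin x a').2.2] at hθya'  -- θ y a'
    have hby : θ b y := htrans b a' y ha' (hsymm y a' hθya')
    right; rw [hu, hv]
    exact ⟨hby, htrans b y x hby hθyx⟩
  · -- u = y, v = y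
    left; rw [hu, hv]

/-- Proposition: block congruences inside blocks.  If `B` is a class of a
congruence `alpha` of `(α; f)` and `θ` is a congruence of the subalgebra
`(B; f)`, then for every `b ∈ B` the relation `θ_b` inflating the `θ`-class of
`b` is a block congruence of `(α; f)`. -/
theorem stmt_3 {α : Type*} (f : α → α → α → α)
    (hcons : IsConservativeOp f) (hmin : IsMinorityOp f)
    (alpha : α → α → Prop) (halpha : IsCong f alpha)
    (B : Set α) (hB : ∃ a₀, B = {x | alpha a₀ x})
    (θ : α → α → Prop)
    (hdom : ∀ x y, θ x y → x ∈ B ∧ y ∈ B)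
    (hrefl : ∀ x ∈ B, θ x x)
    (hsymm : ∀ x y, θ x y → θ y x)
    (htrans : ∀ x y z, θ x y → θ y z → θ x z)
    (hpres : PreservesRel f θ)
    (b : α) (hb : b ∈ B) :
    IsBlockCong f (fun x y => x = y ∨ (θ b x ∧ θ b y)) := by
  have ρtrans : ∀ u v w : α, (u = v ∨ (θ b u ∧ θ b v)) → (v = w ∨ (θ b v ∧ θ b w)) →
      (u = w ∨ (θ b u ∧ θ b w)) := by
    rintro u v w (rfl | ⟨h1, h2⟩) (rfl | ⟨h3, h4⟩)
    · exact Or.inl rfl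
    · exact Or.inr ⟨h3, h4⟩
    · exact Or.inr ⟨h1, h2⟩
    · exact Or.inr ⟨h1, h4⟩
  -- the two permuted operations
  refine ⟨⟨⟨fun x => Or.inl rfl, ?_, ?_⟩, ?_⟩, ?_⟩
  · rintro x y (rfl | ⟨h1, h2⟩)
    · exact Or.inl rfl
    · exact Or.inr ⟨h2, h1⟩
  · exact fun {x y z} => ρtrans x y z
  · -- preservation
    intro a₁ b₁ a₂ b₂ a₃ b₃ h₁ h₂ h₃
    have step1 : f a₁ a₂ a₃ = f b₁ a₂ a₃ ∨ (θ b (f a₁ a₂ a₃) ∧ θ b (f b₁ a₂ a₃)) := by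
      rcases h₁ with rfl | ⟨h, h'⟩
      · exact Or.inl rfl
      · exact key_lemma f hcons hmin alpha halpha B hB θ hdom hrefl hsymm htrans hpres
          b a₁ b₁ a₂ a₃ h h'
    have step2 : f b₁ a₂ a₃ = f b₁ b₂ a₃ ∨ (θ b (f b₁ a₂ a₃) ∧ θ b (f b₁ b₂ a₃)) := by
      rcases h₂ with rfl | ⟨h, h'⟩
      · exact Or.inl rfl
      · exact key_lemma (fun p q r => f q p r)
          (fun x y z => by
            rcases hcons y x z with h | h | h
            · exact Or.inr (Or.inl h)
            · exact Or.inl h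
            · exact Or.inr (Or.inr h))
          (fun x y => ⟨(hmin x y).1, (hmin x y).2.2, (hmin x y).2.1⟩)
          alpha
          ⟨halpha.1, fun c₁ d₁ c₂ d₂ c₃ d₃ k1 k2 k3 => halpha.2 c₂ d₂ c₁ d₁ c₃ d₃ k2 k1 k3⟩
          B hB θ hdom hrefl hsymm htrans
          (fun c₁ d₁ c₂ d₂ c₃ d₃ k1 k2 k3 => hpres c₂ d₂ c₁ d₁ c₃ d₃ k2 k1 k3)
          b a₂ b₂ b₁ a₃ h h'
    have step3 : f b₁ b₂ a₃ = f b₁ b₂ b₃ ∨ (θ b (f b₁ b₂ a₃) ∧ θ b (f b₁ b₂ b₃)) := by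
      rcases h₃ with rfl | ⟨h, h'⟩
      · exact Or.inl rfl
      · exact key_lemma (fun p q r => f q r p)
          (fun x y z => by
            rcases hcons y z x with h | h | h
            · exact Or.inr (Or.inl h)
            · exact Or.inr (Or.inr h)
            · exact Or.inl h)
          (fun x y => ⟨(hmin x y).2.1, (hmin x y).2.2, (hmin x y).1⟩)
          alpha
          ⟨halpha.1, fun c₁ d₁ c₂ d₂ c₃ d₃ k1 k2 k3 => halpha.2 c₂ d₂ c₃ d₃ c₁ d₁ k2 k3 k1⟩
          B hB θ hdom hrefl hsymm htrans
          (fun c₁ d₁ c₂ d₂ c₃ d₃ k1 k2 k3 => hpres c₂ d₂ c₃ d₃ c₁ d₁ k2 k3 k1)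
          b a₃ b₃ b₁ b₂ h h'
    exact ρtrans _ _ _ (ρtrans _ _ _ step1 step2) step3
  · -- block property
    rintro x y z w (rfl | ⟨h1, h2⟩) hne (rfl | ⟨h3, h4⟩) hne'
    · exact absurd rfl hne
    · exact absurd rfl hne
    · exact absurd rfl hne'
    · exact Or.inr ⟨h1, h3⟩
end

section
/- Let f : A³ → A be a conservative minority operation, let θ be a congruence of (A;f), and let a ∈ A. Then the relation θ_a := {(x,y) ∈ A² : x = y, or x ∈ [a]_θ and y ∈ [a]_θ} is a block congruence of (A;f). -/
/-- Corollary: for a congruence `θ` of `(α; f)` and `a ∈ α`, the relation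
`θ_a` keeping only the `θ`-class of `a` is a block congruence of `(α; f)`. -/
theorem stmt_4 {α : Type*} (f : α → α → α → α)
    (hcons : IsConservativeOp f) (hmin : IsMinorityOp f)
    (θ : α → α → Prop) (hθ : IsCong f θ) (a : α) :
    IsBlockCong f (fun x y => x = y ∨ (θ a x ∧ θ a y)) := by
  obtain ⟨heq, hpres⟩ := hθ
  have hle : ∀ x y : α, (x = y ∨ (θ a x ∧ θ a y)) → θ x y := by
    rintro x y (rfl | ⟨hx, hy⟩)
    · exact heq.refl x
    · exact heq.trans (heq.symm hx) hy
  have eqL : ∀ {x y : α}, (x = y ∨ (θ a x ∧ θ a y)) → ¬ θ a x → x = y := by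
    rintro x y (rfl | ⟨hx, _⟩) h
    · rfl
    · exact absurd hx h
  have eqR : ∀ {x y : α}, (x = y ∨ (θ a x ∧ θ a y)) → ¬ θ a y → x = y := by
    rintro x y (rfl | ⟨_, hy⟩) h
    · rfl
    · exact absurd hy h
  refine ⟨⟨⟨fun x => Or.inl rfl, ?_, ?_⟩, ?_⟩, ?_⟩
  · rintro x y (rfl | ⟨hx, hy⟩)
    · exact Or.inl rfl
    · exact Or.inr ⟨hy, hx⟩
  · rintro x y z (rfl | ⟨hx, hy⟩) h
    · exact h
    · rcases h with rfl | ⟨_, hz⟩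
      · exact Or.inr ⟨hx, hy⟩
      · exact Or.inr ⟨hx, hz⟩
  · intro a₁ b₁ a₂ b₂ a₃ b₃ h₁ h₂ h₃
    have huv : θ (f a₁ a₂ a₃) (f b₁ b₂ b₃) :=
      hpres _ _ _ _ _ _ (hle _ _ h₁) (hle _ _ h₂) (hle _ _ h₃)
    by_cases hu : θ a (f a₁ a₂ a₃)
    · exact Or.inr ⟨hu, heq.trans hu huv⟩
    by_cases hv : θ a (f b₁ b₂ b₃)
    · exact Or.inr ⟨heq.trans hv (heq.symm huv), hv⟩
    left
    rcases hcons a₁ a₂ a₃ with hu1 | hu2 | hu3 <;>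
      rcases hcons b₁ b₂ b₃ with hv1 | hv2 | hv3
    -- case u = a₁, v = b₁
    · rw [hu1] at hu
      have e1 : a₁ = b₁ := eqL h₁ hu
      exact hu1.trans (e1.trans hv1.symm)
    -- case u = a₁, v = b₂
    · rw [hu1] at hu
      rw [hv2] at hv
      have e1 : a₁ = b₁ := eqL h₁ hu
      have e2 : a₂ = b₂ := eqR h₂ hv
      rw [hu1, e1] at huv
      have w : θ (f b₁ b₂ b₃) (f (f b₁ b₂ b₃) b₂ b₃) :=
        hpres _ _ _ _ _ _ huv (heq.refl _) (heq.refl _)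
      rw [hv2, (hmin b₂ b₃).1] at w
      have e3 : a₃ = b₃ := eqR h₃ (fun h => hv (heq.trans h (heq.symm w)))
      rw [e1, e2, e3]
    -- case u = a₁, v = b₃
    · rw [hu1] at hu
      rw [hv3] at hv
      have e1 : a₁ = b₁ := eqL h₁ hu
      have e3 : a₃ = b₃ := eqR h₃ hv
      rw [hu1, e1] at huv
      have w : θ (f b₁ b₂ b₃) (f (f b₁ b₂ b₃) b₂ b₃) :=
        hpres _ _ _ _ _ _ huv (heq.refl _) (heq.refl _)
      rw [hv3, (hmin b₃ b₂).2.1] at w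
      have e2 : a₂ = b₂ := eqR h₂ (fun h => hv (heq.trans h (heq.symm w)))
      rw [e1, e2, e3]
    -- case u = a₂, v = b₁
    · rw [hu2] at hu
      rw [hv1] at hv
      have e2 : a₂ = b₂ := eqL h₂ hu
      have e1 : a₁ = b₁ := eqR h₁ hv
      rw [hu2, e2] at huv
      have w : θ (f b₁ b₂ b₃) (f b₁ (f b₁ b₂ b₃) b₃) :=
        hpres _ _ _ _ _ _ (heq.refl _) huv (heq.refl _)
      rw [hv1, (hmin b₁ b₃).1] at w
      have e3 : a₃ = b₃ := eqR h₃ (fun h => hv (heq.trans h (heq.symm w)))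
      rw [e1, e2, e3]
    -- case u = a₂, v = b₂
    · rw [hu2] at hu
      have e2 : a₂ = b₂ := eqL h₂ hu
      exact hu2.trans (e2.trans hv2.symm)
    -- case u = a₂, v = b₃
    · rw [hu2] at hu
      rw [hv3] at hv
      have e2 : a₂ = b₂ := eqL h₂ hu
      have e3 : a₃ = b₃ := eqR h₃ hv
      rw [hu2, e2] at huv
      have w : θ (f b₁ b₂ b₃) (f b₁ (f b₁ b₂ b₃) b₃) :=
        hpres _ _ _ _ _ _ (heq.refl _) huv (heq.refl _)
      rw [hv3, (hmin b₃ b₁).2.2] at w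
      have e1 : a₁ = b₁ := eqR h₁ (fun h => hv (heq.trans h (heq.symm w)))
      rw [e1, e2, e3]
    -- case u = a₃, v = b₁
    · rw [hu3] at hu
      rw [hv1] at hv
      have e3 : a₃ = b₃ := eqL h₃ hu
      have e1 : a₁ = b₁ := eqR h₁ hv
      rw [hu3, e3] at huv
      have w : θ (f b₁ b₂ b₃) (f b₁ b₂ (f b₁ b₂ b₃)) :=
        hpres _ _ _ _ _ _ (heq.refl _) (heq.refl _) huv
      rw [hv1, (hmin b₁ b₂).2.1] at w
      have e2 : a₂ = b₂ := eqR h₂ (fun h => hv (heq.trans h (heq.symm w)))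
      rw [e1, e2, e3]
    -- case u = a₃, v = b₂
    · rw [hu3] at hu
      rw [hv2] at hv
      have e3 : a₃ = b₃ := eqL h₃ hu
      have e2 : a₂ = b₂ := eqR h₂ hv
      rw [hu3, e3] at huv
      have w : θ (f b₁ b₂ b₃) (f b₁ b₂ (f b₁ b₂ b₃)) :=
        hpres _ _ _ _ _ _ (heq.refl _) (heq.refl _) huv
      rw [hv2, (hmin b₂ b₁).2.2] at w
      have e1 : a₁ = b₁ := eqR h₁ (fun h => hv (heq.trans h (heq.symm w)))
      rw [e1, e2, e3]
    -- case u = a₃, v = b₃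
    · rw [hu3] at hu
      have e3 : a₃ = b₃ := eqL h₃ hu
      exact hu3.trans (e3.trans hv3.symm)
  · rintro x y c d (rfl | ⟨hx, hy⟩) hne hcd hne'
    · exact absurd rfl hne
    · rcases hcd with rfl | ⟨hc, _⟩
      · exact absurd rfl hne'
      · exact Or.inr ⟨hx, hc⟩
end

section
/- Let A be a finite set and f : A³ → A a conservative minority operation. A congruence θ of (A;f) is atomic if and only if θ is a nontrivial block congruence whose nontrivial block B is simple, i.e., the only equivalence relations on B preserved by f are the equality relation on B and the full relation B × B. -/
/-- An equivalence relation on the subset `B` preserved by `f`, i.e. a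
congruence of the subalgebra `(B; f)`. -/
def IsCongOn {α : Type*} (f : α → α → α → α) (B : Set α)
    (θ : α → α → Prop) : Prop :=
  (∀ x y, θ x y → x ∈ B ∧ y ∈ B) ∧ (∀ x ∈ B, θ x x) ∧
    (∀ x y, θ x y → θ y x) ∧ (∀ x y z, θ x y → θ y z → θ x z) ∧
    PreservesRel f θ

section Aux

variable {α : Type*} {f : α → α → α → α} {θ : α → α → Prop}

private lemma minL1 (hmin : IsMinorityOp f) (x y : α) : f x y y = x := (hmin y x).2.2
private lemma minL2 (hmin : IsMinorityOp f) (x y : α) : f y x y = x := (hmin y x).2.1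
private lemma minL3 (hmin : IsMinorityOp f) (x y : α) : f y y x = x := (hmin y x).1

private lemma stepL1 (hcons : IsConservativeOp f) (hmin : IsMinorityOp f)
    (hθ : IsCong f θ) {p q : α} (hpq : θ p q) (s t : α) :
    f p s t = f q s t ∨ θ (f p s t) p := by
  obtain ⟨heq, hpre⟩ := hθ
  have hww' : θ (f p s t) (f q s t) := hpre p q s s t t hpq (heq.refl s) (heq.refl t)
  rcases hcons q s t with hq | hq | hq
  · exact Or.inr (heq.trans (hq ▸ hww') (heq.symm hpq))
  · rcases hcons p s t with hp' | hp' | hp'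
    · right; rw [hp']; exact heq.refl p
    · left; rw [hp', hq]
    · -- w = t, w' = s : θ t s
      have hts : θ t s := by rw [hp', hq] at hww'; exact hww'
      have key : θ (f p s t) (f p s s) :=
        hpre p p s s t s (heq.refl p) (heq.refl s) hts
      rw [minL1 hmin p s] at key
      exact Or.inr key
  · rcases hcons p s t with hp' | hp' | hp'
    · right; rw [hp']; exact heq.refl p
    · -- w = s, w' = t : θ s t
      have hts : θ t s := by
        rw [hp', hq] at hww'; exact heq.symm hww'
      have key : θ (f p s t) (f p s s) :=
        hpre p p s s t s (heq.refl p) (heq.refl s) hts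
      rw [minL1 hmin p s] at key
      exact Or.inr key
    · left; rw [hp', hq]

private lemma stepL2 (hcons : IsConservativeOp f) (hmin : IsMinorityOp f)
    (hθ : IsCong f θ) {p q : α} (hpq : θ p q) (s t : α) :
    f s p t = f s q t ∨ θ (f s p t) p := by
  obtain ⟨heq, hpre⟩ := hθ
  have hww' : θ (f s p t) (f s q t) := hpre s s p q t t (heq.refl s) hpq (heq.refl t)
  rcases hcons s q t with hq | hq | hq
  · rcases hcons s p t with hp' | hp' | hp'
    · left; rw [hp', hq]
    · right; rw [hp']; exact heq.refl p
    · have hts : θ t s := by rw [hp', hq] at hww'; exact hww'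
      have key : θ (f s p t) (f s p s) :=
        hpre s s p p t s (heq.refl s) (heq.refl p) hts
      rw [minL2 hmin p s] at key
      exact Or.inr key
  · exact Or.inr (heq.trans (hq ▸ hww') (heq.symm hpq))
  · rcases hcons s p t with hp' | hp' | hp'
    · have hts : θ t s := by rw [hp', hq] at hww'; exact heq.symm hww'
      have key : θ (f s p t) (f s p s) :=
        hpre s s p p t s (heq.refl s) (heq.refl p) hts
      rw [minL2 hmin p s] at key
      exact Or.inr key
    · right; rw [hp']; exact heq.refl p
    · left; rw [hp', hq]

private lemma stepL3 (hcons : IsConservativeOp f) (hmin : IsMinorityOp f)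
    (hθ : IsCong f θ) {p q : α} (hpq : θ p q) (s t : α) :
    f s t p = f s t q ∨ θ (f s t p) p := by
  obtain ⟨heq, hpre⟩ := hθ
  have hww' : θ (f s t p) (f s t q) := hpre s s t t p q (heq.refl s) (heq.refl t) hpq
  rcases hcons s t q with hq | hq | hq
  · rcases hcons s t p with hp' | hp' | hp'
    · left; rw [hp', hq]
    · have hts : θ t s := by rw [hp', hq] at hww'; exact hww'
      have key : θ (f s t p) (f s s p) :=
        hpre s s t s p p (heq.refl s) hts (heq.refl p)
      rw [minL3 hmin p s] at key
      exact Or.inr key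
    · right; rw [hp']; exact heq.refl p
  · rcases hcons s t p with hp' | hp' | hp'
    · have hts : θ t s := by
        rw [hp', hq] at hww'; exact heq.symm hww'
      have key : θ (f s t p) (f s s p) :=
        hpre s s t s p p (heq.refl s) hts (heq.refl p)
      rw [minL3 hmin p s] at key
      exact Or.inr key
    · left; rw [hp', hq]
    · right; rw [hp']; exact heq.refl p
  · exact Or.inr (heq.trans (hq ▸ hww') (heq.symm hpq))

/-- The restriction of a congruence to the class of `a` (plus equality) is a congruence. -/
private lemma restrictCong (hcons : IsConservativeOp f) (hmin : IsMinorityOp f)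
    (hθ : IsCong f θ) (a : α) :
    IsCong f (fun x y => x = y ∨ (θ x y ∧ θ a x ∧ θ a y)) := by
  have heq := hθ.1
  have hpre := hθ.2
  refine ⟨⟨fun x => Or.inl rfl, ?_, ?_⟩, ?_⟩
  · rintro x y (rfl | ⟨h1, h2, h3⟩)
    · exact Or.inl rfl
    · exact Or.inr ⟨heq.symm h1, h3, h2⟩
  · rintro x y z (rfl | ⟨h1, h2, h3⟩) h'
    · exact h'
    · rcases h' with rfl | ⟨g1, g2, g3⟩
      · exact Or.inr ⟨h1, h2, h3⟩
      · exact Or.inr ⟨heq.trans h1 g1, h2, g3⟩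
  · intro a₁ b₁ a₂ b₂ a₃ b₃ h₁ h₂ h₃
    have tr : ∀ x y z : α, (x = y ∨ (θ x y ∧ θ a x ∧ θ a y)) →
        (y = z ∨ (θ y z ∧ θ a y ∧ θ a z)) → (x = z ∨ (θ x z ∧ θ a x ∧ θ a z)) := by
      rintro x y z (rfl | ⟨h1, h2, h3⟩) (rfl | ⟨g1, g2, g3⟩)
      · exact Or.inl rfl
      · exact Or.inr ⟨g1, g2, g3⟩
      · exact Or.inr ⟨h1, h2, h3⟩
      · exact Or.inr ⟨heq.trans h1 g1, h2, g3⟩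
    have step1 : f a₁ a₂ a₃ = f b₁ a₂ a₃ ∨
        (θ (f a₁ a₂ a₃) (f b₁ a₂ a₃) ∧ θ a (f a₁ a₂ a₃) ∧ θ a (f b₁ a₂ a₃)) := by
      rcases h₁ with rfl | ⟨h, ha1, hb1⟩
      · exact Or.inl rfl
      · rcases stepL1 hcons hmin ⟨heq, hpre⟩ h a₂ a₃ with he | hw
        · exact Or.inl he
        · have huv : θ (f a₁ a₂ a₃) (f b₁ a₂ a₃) :=
            hpre a₁ b₁ a₂ a₂ a₃ a₃ h (heq.refl a₂) (heq.refl a₃)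
          have hau : θ a (f a₁ a₂ a₃) := heq.trans ha1 (heq.symm hw)
          exact Or.inr ⟨huv, hau, heq.trans hau huv⟩
    have step2 : f b₁ a₂ a₃ = f b₁ b₂ a₃ ∨
        (θ (f b₁ a₂ a₃) (f b₁ b₂ a₃) ∧ θ a (f b₁ a₂ a₃) ∧ θ a (f b₁ b₂ a₃)) := by
      rcases h₂ with rfl | ⟨h, ha2, hb2⟩
      · exact Or.inl rfl
      · rcases stepL2 hcons hmin ⟨heq, hpre⟩ h b₁ a₃ with he | hw
        · exact Or.inl he
        · have huv : θ (f b₁ a₂ a₃) (f b₁ b₂ a₃) :=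
            hpre b₁ b₁ a₂ b₂ a₃ a₃ (heq.refl b₁) h (heq.refl a₃)
          have hau : θ a (f b₁ a₂ a₃) := heq.trans ha2 (heq.symm hw)
          exact Or.inr ⟨huv, hau, heq.trans hau huv⟩
    have step3 : f b₁ b₂ a₃ = f b₁ b₂ b₃ ∨
        (θ (f b₁ b₂ a₃) (f b₁ b₂ b₃) ∧ θ a (f b₁ b₂ a₃) ∧ θ a (f b₁ b₂ b₃)) := by
      rcases h₃ with rfl | ⟨h, ha3, hb3⟩
      · exact Or.inl rfl
      · rcases stepL3 hcons hmin ⟨heq, hpre⟩ h b₁ b₂ with he | hw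
        · exact Or.inl he
        · have huv : θ (f b₁ b₂ a₃) (f b₁ b₂ b₃) :=
            hpre b₁ b₁ b₂ b₂ a₃ b₃ (heq.refl b₁) (heq.refl b₂) h
          have hau : θ a (f b₁ b₂ a₃) := heq.trans ha3 (heq.symm hw)
          exact Or.inr ⟨huv, hau, heq.trans hau huv⟩
    exact tr _ _ _ (tr _ _ _ step1 step2) step3

private lemma stepS1 (hcons : IsConservativeOp f) (hmin : IsMinorityOp f)
    (hθ : IsCong f θ) {a : α}
    (hB : ∀ w w' : α, θ w w' → w ≠ w' → θ a w)
    {ψ : α → α → Prop} (hψ : IsCongOn f {x | θ a x} ψ)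
    {p q : α} (hpq : ψ p q) (s t : α) :
    f p s t = f q s t ∨ ψ (f p s t) (f q s t) := by
  obtain ⟨heq, hpre⟩ := hθ
  obtain ⟨hdom, hrefl, hsym, htrans, hψpre⟩ := hψ
  have hap : θ a p := (hdom p q hpq).1
  have haq : θ a q := (hdom p q hpq).2
  have hθpq : θ p q := heq.trans (heq.symm hap) haq
  have hww' : θ (f p s t) (f q s t) := hpre p q s s t t hθpq (heq.refl s) (heq.refl t)
  by_cases hwe : f p s t = f q s t
  · exact Or.inl hwe
  have haw : θ a (f p s t) := hB _ _ hww' hwe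
  have haw' : θ a (f q s t) := heq.trans haw hww'
  by_cases has : θ a s
  · have hat : θ a t := by
      have hsp : θ s p := heq.trans (heq.symm has) hap
      have key : θ (f p s t) (f p p t) := hpre p p s p t t (heq.refl p) hsp (heq.refl t)
      rw [minL3 hmin t p] at key
      exact heq.trans haw key
    exact Or.inr (hψpre p q s s t t hpq (hrefl s has) (hrefl t hat))
  · have hat : ¬ θ a t := by
      intro hat
      apply has
      have htp : θ t p := heq.trans (heq.symm hat) hap
      have key : θ (f p s t) (f p s p) := hpre p p s s t p (heq.refl p) (heq.refl s) htp
      rw [minL2 hmin s p] at key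
      exact heq.trans haw key
    have hw : f p s t = p := by
      rcases hcons p s t with h | h | h
      · exact h
      · exact absurd (h ▸ haw) has
      · exact absurd (h ▸ haw) hat
    have hw' : f q s t = q := by
      rcases hcons q s t with h | h | h
      · exact h
      · exact absurd (h ▸ haw') has
      · exact absurd (h ▸ haw') hat
    right; rw [hw, hw']; exact hpq

private lemma stepS2 (hcons : IsConservativeOp f) (hmin : IsMinorityOp f)
    (hθ : IsCong f θ) {a : α}
    (hB : ∀ w w' : α, θ w w' → w ≠ w' → θ a w)
    {ψ : α → α → Prop} (hψ : IsCongOn f {x | θ a x} ψ)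
    {p q : α} (hpq : ψ p q) (s t : α) :
    f s p t = f s q t ∨ ψ (f s p t) (f s q t) := by
  obtain ⟨heq, hpre⟩ := hθ
  obtain ⟨hdom, hrefl, hsym, htrans, hψpre⟩ := hψ
  have hap : θ a p := (hdom p q hpq).1
  have haq : θ a q := (hdom p q hpq).2
  have hθpq : θ p q := heq.trans (heq.symm hap) haq
  have hww' : θ (f s p t) (f s q t) := hpre s s p q t t (heq.refl s) hθpq (heq.refl t)
  by_cases hwe : f s p t = f s q t
  · exact Or.inl hwe
  have haw : θ a (f s p t) := hB _ _ hww' hwe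
  have haw' : θ a (f s q t) := heq.trans haw hww'
  by_cases has : θ a s
  · have hat : θ a t := by
      have hsp : θ s p := heq.trans (heq.symm has) hap
      have key : θ (f s p t) (f p p t) := hpre s p p p t t hsp (heq.refl p) (heq.refl t)
      rw [minL3 hmin t p] at key
      exact heq.trans haw key
    exact Or.inr (hψpre s s p q t t (hrefl s has) hpq (hrefl t hat))
  · have hat : ¬ θ a t := by
      intro hat
      apply has
      have htp : θ t p := heq.trans (heq.symm hat) hap
      have key : θ (f s p t) (f s p p) := hpre s s p p t p (heq.refl s) (heq.refl p) htp
      rw [minL1 hmin s p] at key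
      exact heq.trans haw key
    have hw : f s p t = p := by
      rcases hcons s p t with h | h | h
      · exact absurd (h ▸ haw) has
      · exact h
      · exact absurd (h ▸ haw) hat
    have hw' : f s q t = q := by
      rcases hcons s q t with h | h | h
      · exact absurd (h ▸ haw') has
      · exact h
      · exact absurd (h ▸ haw') hat
    right; rw [hw, hw']; exact hpq

private lemma stepS3 (hcons : IsConservativeOp f) (hmin : IsMinorityOp f)
    (hθ : IsCong f θ) {a : α}
    (hB : ∀ w w' : α, θ w w' → w ≠ w' → θ a w)
    {ψ : α → α → Prop} (hψ : IsCongOn f {x | θ a x} ψ)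
    {p q : α} (hpq : ψ p q) (s t : α) :
    f s t p = f s t q ∨ ψ (f s t p) (f s t q) := by
  obtain ⟨heq, hpre⟩ := hθ
  obtain ⟨hdom, hrefl, hsym, htrans, hψpre⟩ := hψ
  have hap : θ a p := (hdom p q hpq).1
  have haq : θ a q := (hdom p q hpq).2
  have hθpq : θ p q := heq.trans (heq.symm hap) haq
  have hww' : θ (f s t p) (f s t q) := hpre s s t t p q (heq.refl s) (heq.refl t) hθpq
  by_cases hwe : f s t p = f s t q
  · exact Or.inl hwe
  have haw : θ a (f s t p) := hB _ _ hww' hwe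
  have haw' : θ a (f s t q) := heq.trans haw hww'
  by_cases has : θ a s
  · have hat : θ a t := by
      have hsp : θ s p := heq.trans (heq.symm has) hap
      have key : θ (f s t p) (f p t p) := hpre s p t t p p hsp (heq.refl t) (heq.refl p)
      rw [minL2 hmin t p] at key
      exact heq.trans haw key
    exact Or.inr (hψpre s s t t p q (hrefl s has) (hrefl t hat) hpq)
  · have hat : ¬ θ a t := by
      intro hat
      apply has
      have htp : θ t p := heq.trans (heq.symm hat) hap
      have key : θ (f s t p) (f s p p) := hpre s s t p p p (heq.refl s) htp (heq.refl p)
      rw [minL1 hmin s p] at key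
      exact heq.trans haw key
    have hw : f s t p = p := by
      rcases hcons s t p with h | h | h
      · exact absurd (h ▸ haw) has
      · exact absurd (h ▸ haw) hat
      · exact h
    have hw' : f s t q = q := by
      rcases hcons s t q with h | h | h
      · exact absurd (h ▸ haw') has
      · exact absurd (h ▸ haw') hat
      · exact h
    right; rw [hw, hw']; exact hpq

/-- `Δ ∪ ψ` is a congruence of the whole algebra, when `ψ` is a congruence of
the block `B` of a block congruence `θ`. -/
private lemma unionCong (hcons : IsConservativeOp f) (hmin : IsMinorityOp f)
    (hθ : IsCong f θ) {a : α}
    (hB : ∀ w w' : α, θ w w' → w ≠ w' → θ a w)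
    {ψ : α → α → Prop} (hψ : IsCongOn f {x | θ a x} ψ) :
    IsCong f (fun x y => x = y ∨ ψ x y) := by
  have tr : ∀ x y z : α, (x = y ∨ ψ x y) → (y = z ∨ ψ y z) → (x = z ∨ ψ x z) := by
    rintro x y z (rfl | h) (rfl | h2)
    · exact Or.inl rfl
    · exact Or.inr h2
    · exact Or.inr h
    · exact Or.inr (hψ.2.2.2.1 x y z h h2)
  refine ⟨⟨fun x => Or.inl rfl, ?_, fun h h2 => tr _ _ _ h h2⟩, ?_⟩
  · rintro x y (rfl | h)
    · exact Or.inl rfl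
    · exact Or.inr (hψ.2.2.1 x y h)
  · intro a₁ b₁ a₂ b₂ a₃ b₃ h₁ h₂ h₃
    have step1 : f a₁ a₂ a₃ = f b₁ a₂ a₃ ∨ ψ (f a₁ a₂ a₃) (f b₁ a₂ a₃) := by
      rcases h₁ with rfl | h
      · exact Or.inl rfl
      · exact stepS1 hcons hmin hθ hB hψ h a₂ a₃
    have step2 : f b₁ a₂ a₃ = f b₁ b₂ a₃ ∨ ψ (f b₁ a₂ a₃) (f b₁ b₂ a₃) := by
      rcases h₂ with rfl | h
      · exact Or.inl rfl
      · exact stepS2 hcons hmin hθ hB hψ h b₁ a₃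
    have step3 : f b₁ b₂ a₃ = f b₁ b₂ b₃ ∨ ψ (f b₁ b₂ a₃) (f b₁ b₂ b₃) := by
      rcases h₃ with rfl | h
      · exact Or.inl rfl
      · exact stepS3 hcons hmin hθ hB hψ h b₁ b₂
    exact tr _ _ _ (tr _ _ _ step1 step2) step3

end Aux


/-- The atomic congruences of a finite conservative minority algebra are
exactly the nontrivial block congruences whose nontrivial block is simple. -/
theorem stmt_5 {α : Type*} [Fintype α] (f : α → α → α → α)
    (hcons : IsConservativeOp f) (hmin : IsMinorityOp f)
    (θ : α → α → Prop) (hθ : IsCong f θ) :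
    IsAtomicCong f θ ↔
      (IsBlockCong f θ ∧
        ∃ a b, a ≠ b ∧ θ a b ∧
          ∀ ψ : α → α → Prop, IsCongOn f {x | θ a x} ψ →
            (∀ x y, ψ x y → x = y) ∨ (∀ x y, θ a x → θ a y → ψ x y)) := by
  constructor
  · rintro ⟨hc, ⟨a, b, hab, hne⟩, hmax⟩
    -- the block property
    have hblock : ∀ c d e g : α, θ c d → c ≠ d → θ e g → e ≠ g → θ c e := by
      intro c d e g hcd hcdne heg hegne
      have hθ' := restrictCong hcons hmin hθ c
      have hnt : NontrivialRel (fun x y => x = y ∨ (θ x y ∧ θ c x ∧ θ c y)) :=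
        ⟨c, d, Or.inr ⟨hcd, hθ.1.refl c, hcd⟩, hcdne⟩
      have hle : RelLE (fun x y => x = y ∨ (θ x y ∧ θ c x ∧ θ c y)) θ := by
        rintro x y (rfl | ⟨h, _, _⟩)
        · exact hθ.1.refl x
        · exact h
      have hiff := hmax _ hθ' hnt hle
      rcases (hiff e g).mpr heg with rfl | ⟨_, hce, _⟩
      · exact absurd rfl hegne
      · exact hce
    refine ⟨⟨hθ, hblock⟩, a, b, hne, hab, ?_⟩
    intro ψ hψ
    by_cases htriv : ∀ x y, ψ x y → x = y
    · exact Or.inl htriv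
    · right
      push_neg at htriv
      obtain ⟨x₀, y₀, hxy, hxyne⟩ := htriv
      have hB : ∀ w w' : α, θ w w' → w ≠ w' → θ a w :=
        fun w w' h hne' => hblock a b w w' hab hne h hne'
      have hcongU := unionCong hcons hmin hθ hB hψ
      have hnt : NontrivialRel (fun x y => x = y ∨ ψ x y) :=
        ⟨x₀, y₀, Or.inr hxy, hxyne⟩
      have hle : RelLE (fun x y => x = y ∨ ψ x y) θ := by
        rintro u v (rfl | h)
        · exact hθ.1.refl u
        · exact hθ.1.trans (hθ.1.symm (hψ.1 u v h).1) (hψ.1 u v h).2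
      have hiff := hmax _ hcongU hnt hle
      intro x y hax hay
      have hxy' : θ x y := hθ.1.trans (hθ.1.symm hax) hay
      rcases (hiff x y).mpr hxy' with rfl | h
      · exact hψ.2.1 x hax
      · exact h
  · rintro ⟨⟨hcong, hblk⟩, a, b, hne, hab, hsimple⟩
    refine ⟨hθ, ⟨a, b, hab, hne⟩, ?_⟩
    rintro θ' hθ'c ⟨c, d, hcd, hcdne⟩ hle x y
    have hθcd : θ c d := hle c d hcd
    have hac : θ a c := hblk a b c d hab hne hθcd hcdne
    have had : θ a d := hθ.1.trans hac hθcd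
    set ψ : α → α → Prop := fun u v => θ' u v ∧ θ a u ∧ θ a v with hψdef
    have hψcong : IsCongOn f {x | θ a x} ψ := by
      refine ⟨fun u v h => ⟨h.2.1, h.2.2⟩, fun u hu => ⟨hθ'c.1.refl u, hu, hu⟩,
        fun u v h => ⟨hθ'c.1.symm h.1, h.2.2, h.2.1⟩,
        fun u v w h g => ⟨hθ'c.1.trans h.1 g.1, h.2.1, g.2.2⟩, ?_⟩
      intro a₁ b₁ a₂ b₂ a₃ b₃ h₁ h₂ h₃
      refine ⟨hθ'c.2 a₁ b₁ a₂ b₂ a₃ b₃ h₁.1 h₂.1 h₃.1, ?_, ?_⟩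
      · rcases hcons a₁ a₂ a₃ with h | h | h
        · rw [h]; exact h₁.2.1
        · rw [h]; exact h₂.2.1
        · rw [h]; exact h₃.2.1
      · rcases hcons b₁ b₂ b₃ with h | h | h
        · rw [h]; exact h₁.2.2
        · rw [h]; exact h₂.2.2
        · rw [h]; exact h₃.2.2
    have hfull : ∀ u v, θ a u → θ a v → ψ u v := by
      rcases hsimple ψ hψcong with htriv | hfull
      · exact absurd (htriv c d ⟨hcd, hac, had⟩) hcdne
      · exact hfull
    constructor
    · exact hle x y
    · intro hxy
      by_cases hxy' : x = y
      · subst hxy'; exact hθ'c.1.refl x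
      · have hax : θ a x := hblk a b x y hab hne hxy hxy'
        have hay : θ a y := hθ.1.trans hax hxy
        exact (hfull x y hax hay).1
end

section
/- Let f : A³ → A be a conservative Maltsev operation and let θ₁, θ₂ be block congruences of (A;f). If the classes [a]_{θ₁} and [b]_{θ₂} have a nonempty intersection for some a, b ∈ A, then [a]_{θ₁} ⊆ [b]_{θ₂} or [b]_{θ₂} ⊆ [a]_{θ₁}. -/
/-- Classes of block congruences of a conservative Maltsev algebra that
intersect are comparable. -/
theorem stmt_6 {α : Type*} (f : α → α → α → α)
    (hcons : IsConservativeOp f) (hmal : IsMaltsevOp f)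
    (θ₁ θ₂ : α → α → Prop)
    (h₁ : IsBlockCong f θ₁) (h₂ : IsBlockCong f θ₂)
    (a b : α) (hint : ({x | θ₁ a x} ∩ {x | θ₂ b x}).Nonempty) :
    {x | θ₁ a x} ⊆ {x | θ₂ b x} ∨ {x | θ₂ b x} ⊆ {x | θ₁ a x} := by
  obtain ⟨c, hc1, hc2⟩ := hint
  by_contra h
  push_neg at h
  obtain ⟨hP, hQ⟩ := h
  obtain ⟨x, hx1, hx2⟩ := Set.not_subset.mp hP
  obtain ⟨y, hy2, hy1⟩ := Set.not_subset.mp hQ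
  simp only [Set.mem_setOf_eq] at *
  obtain ⟨⟨heq1, hpre1⟩, -⟩ := h₁
  obtain ⟨⟨heq2, hpre2⟩, -⟩ := h₂
  have hxc : θ₁ x c := heq1.trans (heq1.symm hx1) hc1
  have hcy : θ₂ c y := heq2.trans (heq2.symm hc2) hy2
  have hd1 : θ₁ (f x c y) y := by
    have := hpre1 x c c c y y hxc (heq1.refl c) (heq1.refl y)
    rwa [(hmal c y).1] at this
  have hd2 : θ₂ (f x c y) x := by
    have := hpre2 x x c y y y (heq2.refl x) hcy (heq2.refl y)
    rwa [(hmal y x).2] at this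
  rcases hcons x c y with h | h | h
  · exact hy1 (heq1.trans hx1 (h ▸ hd1))
  · exact hy1 (heq1.trans hc1 (h ▸ hd1))
  · exact hx2 (heq2.trans hy2 (h ▸ hd2))
end

section
/- Let A be a finite set with |A| ≥ 2 and let f : A³ → A be a conservative minority operation. Then for every a ∈ A there exists a proper subset B_a ⊊ A with a ∈ B_a such that B_a is an equivalence class of some congruence of (A;f), and every proper subset C ⊊ A with a ∈ C that is an equivalence class of some congruence of (A;f) satisfies C ⊆ B_a; in particular, B_a is the unique maximal such subset. -/
section Aux

variable {α : Type*} {f : α → α → α → α}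

/-- Step lemma: if `θ₂ a x`, `θ₁ x y` and `¬ θ₂ a y`, then `θ₁ a y`. -/
lemma step_lemma (hcons : IsConservativeOp f) (hmin : IsMinorityOp f)
    {θ₁ θ₂ : α → α → Prop} (h₁ : IsCong f θ₁) (h₂ : IsCong f θ₂)
    {a x y : α} (hax : θ₂ a x) (hxy : θ₁ x y) (hay : ¬ θ₂ a y) : θ₁ a y := by
  obtain ⟨e₁, p₁⟩ := h₁
  obtain ⟨e₂, p₂⟩ := h₂
  have hw1 : θ₁ (f y x a) a := by
    have := p₁ y x x x a a (e₁.symm hxy) (e₁.refl x) (e₁.refl a)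
    rwa [(hmin x a).1] at this
  have hw2 : θ₂ (f y x a) y := by
    have := p₂ y y x x a x (e₂.refl y) (e₂.refl x) hax
    rwa [(hmin x y).2.2] at this
  rcases hcons y x a with h | h | h
  · rw [h] at hw1; exact e₁.symm hw1
  · rw [h] at hw2; exact absurd (e₂.trans hax hw2) hay
  · rw [h] at hw2; exact absurd hw2 hay

/-- Two proper congruence classes around `a` do not cover `α`. -/
lemma not_cover (hcons : IsConservativeOp f) (hmin : IsMinorityOp f)
    {θ₁ θ₂ : α → α → Prop} (h₁ : IsCong f θ₁) (h₂ : IsCong f θ₂)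
    {a b c : α} (hb : ¬ θ₁ a b) (hc : ¬ θ₂ a c) :
    ∃ u, ¬ θ₁ a u ∧ ¬ θ₂ a u := by
  by_contra hall
  push_neg at hall
  obtain ⟨e₁, p₁⟩ := h₁
  obtain ⟨e₂, p₂⟩ := h₂
  have hab : θ₂ a b := hall b hb
  have hac : θ₁ a c := by
    by_contra h
    exact hc (hall c h)
  have hw1 : θ₁ (f c a b) b := by
    have := p₁ c a a a b b (e₁.symm hac) (e₁.refl a) (e₁.refl b)
    rwa [(hmin a b).1] at this
  have hw2 : θ₂ (f c a b) c := by
    have := p₂ c c a a b a (e₂.refl c) (e₂.refl a) (e₂.symm hab)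
    rwa [(hmin a c).2.2] at this
  rcases hcons c a b with h | h | h
  · rw [h] at hw1; exact hb (e₁.trans hac hw1)
  · rw [h] at hw1; exact hb hw1
  · rw [h] at hw2; exact hc (e₂.trans hab hw2)

/-- The equivalence closure of the union of two congruences is a congruence. -/
lemma join_isCong {θ₁ θ₂ : α → α → Prop} (h₁ : IsCong f θ₁) (h₂ : IsCong f θ₂) :
    IsCong f (Relation.EqvGen (fun x y => θ₁ x y ∨ θ₂ x y)) := by
  obtain ⟨e₁, p₁⟩ := h₁
  obtain ⟨e₂, p₂⟩ := h₂
  set r : α → α → Prop := fun x y => θ₁ x y ∨ θ₂ x y with hr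
  refine ⟨Relation.EqvGen.is_equivalence r, ?_⟩
  have key : ∀ x y, Relation.EqvGen r x y → ∀ c d,
      Relation.EqvGen r (f x c d) (f y c d) ∧
      Relation.EqvGen r (f c x d) (f c y d) ∧
      Relation.EqvGen r (f c d x) (f c d y) := by
    intro x y hxy
    induction hxy with
    | rel x y h =>
      intro c d
      rcases h with h | h
      · exact ⟨Relation.EqvGen.rel _ _ (Or.inl (p₁ x y c c d d h (e₁.refl c) (e₁.refl d))),
          Relation.EqvGen.rel _ _ (Or.inl (p₁ c c x y d d (e₁.refl c) h (e₁.refl d))),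
          Relation.EqvGen.rel _ _ (Or.inl (p₁ c c d d x y (e₁.refl c) (e₁.refl d) h))⟩
      · exact ⟨Relation.EqvGen.rel _ _ (Or.inr (p₂ x y c c d d h (e₂.refl c) (e₂.refl d))),
          Relation.EqvGen.rel _ _ (Or.inr (p₂ c c x y d d (e₂.refl c) h (e₂.refl d))),
          Relation.EqvGen.rel _ _ (Or.inr (p₂ c c d d x y (e₂.refl c) (e₂.refl d) h))⟩
    | refl x => intro c d; exact ⟨Relation.EqvGen.refl _, Relation.EqvGen.refl _,
        Relation.EqvGen.refl _⟩
    | symm x y _ ih => intro c d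
                       exact ⟨Relation.EqvGen.symm _ _ (ih c d).1,
                         Relation.EqvGen.symm _ _ (ih c d).2.1,
                         Relation.EqvGen.symm _ _ (ih c d).2.2⟩
    | trans x y z _ _ ih₁ ih₂ => intro c d
                                 exact ⟨Relation.EqvGen.trans _ _ _ (ih₁ c d).1 (ih₂ c d).1,
                                   Relation.EqvGen.trans _ _ _ (ih₁ c d).2.1 (ih₂ c d).2.1,
                                   Relation.EqvGen.trans _ _ _ (ih₁ c d).2.2 (ih₂ c d).2.2⟩
  intro a₁ b₁ a₂ b₂ a₃ b₃ hab₁ hab₂ hab₃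
  exact Relation.EqvGen.trans _ _ _ ((key a₁ b₁ hab₁ a₂ a₃).1)
    (Relation.EqvGen.trans _ _ _ ((key a₂ b₂ hab₂ b₁ a₃).2.1) ((key a₃ b₃ hab₃ b₁ b₂).2.2))

/-- The class of `a` in the join is contained in the union of the two classes. -/
lemma join_class_subset (hcons : IsConservativeOp f) (hmin : IsMinorityOp f)
    {θ₁ θ₂ : α → α → Prop} (h₁ : IsCong f θ₁) (h₂ : IsCong f θ₂) (a : α) :
    ∀ x y, Relation.EqvGen (fun x y => θ₁ x y ∨ θ₂ x y) x y →
      ((θ₁ a x ∨ θ₂ a x) ↔ (θ₁ a y ∨ θ₂ a y)) := by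
  have e₁ := h₁.1
  have e₂ := h₂.1
  have onestep : ∀ x y, (θ₁ x y ∨ θ₂ x y) → (θ₁ a x ∨ θ₂ a x) → (θ₁ a y ∨ θ₂ a y) := by
    intro x y hxy hx
    rcases hxy with hxy | hxy
    · rcases hx with hx | hx
      · exact Or.inl (e₁.trans hx hxy)
      · by_cases hy : θ₂ a y
        · exact Or.inr hy
        · exact Or.inl (step_lemma hcons hmin h₁ h₂ hx hxy hy)
    · rcases hx with hx | hx
      · by_cases hy : θ₁ a y
        · exact Or.inl hy
        · exact Or.inr (step_lemma hcons hmin h₂ h₁ hx hxy hy)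
      · exact Or.inr (e₂.trans hx hxy)
  intro x y hxy
  induction hxy with
  | rel x y h =>
      refine ⟨onestep x y h, onestep y x ?_⟩
      rcases h with h | h
      · exact Or.inl (e₁.symm h)
      · exact Or.inr (e₂.symm h)
  | refl x => exact Iff.rfl
  | symm x y _ ih => exact ih.symm
  | trans x y z _ _ ih₁ ih₂ => exact ih₁.trans ih₂

end Aux

/-- For every `a` there is a unique maximal proper subset `B_a ∋ a` that is a
class of a congruence of `(α; f)`. -/
theorem stmt_8 {α : Type*} [Fintype α] (hcard : 2 ≤ Fintype.card α)
    (f : α → α → α → α)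
    (hcons : IsConservativeOp f) (hmin : IsMinorityOp f) (a : α) :
    ∃ B : Set α, B ≠ Set.univ ∧ a ∈ B ∧
      (∃ θ : α → α → Prop, IsCong f θ ∧ ∃ c, B = {x | θ c x}) ∧
      ∀ C : Set α, C ≠ Set.univ → a ∈ C →
        (∃ θ : α → α → Prop, IsCong f θ ∧ ∃ c, C = {x | θ c x}) → C ⊆ B := by
  classical
  -- the family of proper congruence classes containing `a`
  set 𝒞 : Set (Set α) := {C | C ≠ Set.univ ∧ a ∈ C ∧
      ∃ θ : α → α → Prop, IsCong f θ ∧ ∃ c, C = {x | θ c x}} with h𝒞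
  -- normalization: such a class is the class of `a`
  have norm : ∀ C ∈ 𝒞, ∃ θ : α → α → Prop, IsCong f θ ∧ C = {x | θ a x} := by
    rintro C ⟨-, haC, θ, hθ, c, rfl⟩
    refine ⟨θ, hθ, ?_⟩
    have hca : θ c a := haC
    ext x
    exact ⟨fun h => hθ.1.trans (hθ.1.symm hca) h, fun h => hθ.1.trans hca h⟩
  -- `𝒞` is nonempty: it contains `{a}` via the equality congruence
  have hEqCong : IsCong f (Eq : α → α → Prop) := by
    refine ⟨eq_equivalence, ?_⟩
    rintro a₁ b₁ a₂ b₂ a₃ b₃ rfl rfl rfl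
    rfl
  obtain ⟨b, hba⟩ := Fintype.exists_ne_of_one_lt_card (by omega) a
  have hsingle : ({x | a = x} : Set α) ∈ 𝒞 := by
    refine ⟨?_, rfl, Eq, hEqCong, a, rfl⟩
    intro h
    have hb : b ∈ ({x | a = x} : Set α) := h ▸ Set.mem_univ b
    exact hba (hb : a = b).symm
  -- directedness of `𝒞`
  have hdir : ∀ C₁ ∈ 𝒞, ∀ C₂ ∈ 𝒞, ∃ D ∈ 𝒞, C₁ ⊆ D ∧ C₂ ⊆ D := by
    intro C₁ hC₁ C₂ hC₂
    obtain ⟨θ₁, hθ₁, rfl⟩ := norm C₁ hC₁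
    obtain ⟨θ₂, hθ₂, rfl⟩ := norm C₂ hC₂
    set r : α → α → Prop := fun x y => θ₁ x y ∨ θ₂ x y with hrdef
    refine ⟨{x | Relation.EqvGen r a x}, ⟨?_, Relation.EqvGen.refl a,
      Relation.EqvGen r, join_isCong hθ₁ hθ₂, a, rfl⟩, ?_, ?_⟩
    · -- properness
      obtain ⟨b₁, hb₁⟩ : ∃ b₁, ¬ θ₁ a b₁ := by
        by_contra h
        push_neg at h
        exact hC₁.1 (Set.eq_univ_iff_forall.2 h)
      obtain ⟨b₂, hb₂⟩ : ∃ b₂, ¬ θ₂ a b₂ := by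
        by_contra h
        push_neg at h
        exact hC₂.1 (Set.eq_univ_iff_forall.2 h)
      obtain ⟨u, hu₁, hu₂⟩ := not_cover hcons hmin hθ₁ hθ₂ hb₁ hb₂
      intro h
      have hu : u ∈ {x | Relation.EqvGen r a x} := h ▸ Set.mem_univ u
      have := (join_class_subset hcons hmin hθ₁ hθ₂ a a u hu).1
        (Or.inl (hθ₁.1.refl a))
      rcases this with h' | h'
      · exact hu₁ h'
      · exact hu₂ h'
    · exact fun x hx => Relation.EqvGen.rel _ _ (Or.inl hx)
    · exact fun x hx => Relation.EqvGen.rel _ _ (Or.inr hx)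
  -- take a maximal element of `𝒞`
  obtain ⟨B, hB, hmax⟩ := Set.Finite.exists_maximalFor id 𝒞 (Set.toFinite 𝒞)
    ⟨_, hsingle⟩
  refine ⟨B, hB.1, hB.2.1, hB.2.2, ?_⟩
  intro C hCuniv haC hCcong
  have hC : C ∈ 𝒞 := ⟨hCuniv, haC, hCcong⟩
  obtain ⟨D, hD, hBD, hCD⟩ := hdir B hB C hC
  have : B = D := le_antisymm hBD (hmax hD hBD)
  exact this ▸ hCD
end

section
/- Let A be a finite set with |A| ≥ 2 and let f : A³ → A be a conservative minority operation. Then (A;f) has a unique maximal proper congruence: the partially ordered set (under inclusion) of congruences of (A;f) that are different from the full relation A × A has exactly one maximal element. -/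
section AuxStmt9

variable {α : Type*} (f : α → α → α → α)

/-- Permutability: a θ₂ step followed by a θ₁ step can be replaced by a θ₁
step followed by a θ₂ step, using the Maltsev (minority) term. -/
lemma aux9_swap (hmin : IsMinorityOp f) {θ₁ θ₂ : α → α → Prop}
    (h₁ : IsCong f θ₁) (h₂ : IsCong f θ₂) {x y z : α}
    (hxy : θ₂ x y) (hyz : θ₁ y z) : ∃ m, θ₁ x m ∧ θ₂ m z := by
  refine ⟨f x y z, ?_, ?_⟩
  · have h := h₁.2 x x y y y z (h₁.1.refl x) (h₁.1.refl y) hyz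
    rwa [(hmin y x).2.2] at h
  · have h := h₂.2 x y y y z z hxy (h₂.1.refl y) (h₂.1.refl z)
    rwa [(hmin y z).1] at h

/-- The composition of two congruences is a congruence. -/
lemma aux9_join (hmin : IsMinorityOp f) {θ₁ θ₂ : α → α → Prop}
    (h₁ : IsCong f θ₁) (h₂ : IsCong f θ₂) :
    IsCong f (fun x y => ∃ m, θ₁ x m ∧ θ₂ m y) := by
  constructor
  · constructor
    · exact fun x => ⟨x, h₁.1.refl x, h₂.1.refl x⟩
    · rintro x y ⟨m, hxm, hmy⟩
      exact aux9_swap f hmin h₁ h₂ (h₂.1.symm hmy) (h₁.1.symm hxm)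
    · rintro x y z ⟨m, hxm, hmy⟩ ⟨n, hyn, hnz⟩
      obtain ⟨t, hmt, htn⟩ := aux9_swap f hmin h₁ h₂ hmy hyn
      exact ⟨t, h₁.1.trans hxm hmt, h₂.1.trans htn hnz⟩
  · rintro a₁ b₁ a₂ b₂ a₃ b₃ ⟨m₁, hm₁, hm₁'⟩ ⟨m₂, hm₂, hm₂'⟩ ⟨m₃, hm₃, hm₃'⟩
    exact ⟨f m₁ m₂ m₃, h₁.2 _ _ _ _ _ _ hm₁ hm₂ hm₃, h₂.2 _ _ _ _ _ _ hm₁' hm₂' hm₃'⟩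

/-- The key "grid" contradiction from conservativity. -/
lemma aux9_grid (hcons : IsConservativeOp f) (hmin : IsMinorityOp f)
    {θ₁ θ₂ : α → α → Prop} (h₁ : IsCong f θ₁) (h₂ : IsCong f θ₂)
    {p q r : α} (hpq1 : θ₁ p q) (hpq2 : ¬ θ₂ p q)
    (hpr2 : θ₂ p r) (hpr1 : ¬ θ₁ p r) : False := by
  have hs1 : θ₁ (f p q r) r := by
    have h := h₁.2 p q q q r r hpq1 (h₁.1.refl q) (h₁.1.refl r)
    rwa [(hmin q r).1] at h
  have hs2 : θ₂ (f p q r) q := by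
    have h := h₂.2 p p q q r p (h₂.1.refl p) (h₂.1.refl q) (h₂.1.symm hpr2)
    rwa [(hmin p q).2.1] at h
  rcases hcons p q r with h | h | h
  · exact hpr1 (h ▸ hs1)
  · exact hpr1 (h₁.1.trans hpq1 (h ▸ hs1))
  · exact hpq2 (h₂.1.trans hpr2 (h ▸ hs2))

/-- Any two maximal proper congruences agree. -/
lemma aux9_maxEq (hcons : IsConservativeOp f) (hmin : IsMinorityOp f)
    {θ₁ θ₂ : α → α → Prop}
    (h₁ : IsCong f θ₁) (hp₁ : ¬ (∀ x y, θ₁ x y))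
    (hm₁ : ∀ θ' : α → α → Prop, IsCong f θ' → ¬(∀ x y, θ' x y) →
      RelLE θ₁ θ' → RelLE θ' θ₁)
    (h₂ : IsCong f θ₂) (hp₂ : ¬ (∀ x y, θ₂ x y))
    (hm₂ : ∀ θ' : α → α → Prop, IsCong f θ' → ¬(∀ x y, θ' x y) →
      RelLE θ₂ θ' → RelLE θ' θ₂) :
    ∀ x y, θ₁ x y ↔ θ₂ x y := by
  classical
  by_cases hle : RelLE θ₁ θ₂
  · have h := hm₁ θ₂ h₂ hp₂ hle
    exact fun x y => ⟨fun hh => hle x y hh, fun hh => h x y hh⟩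
  by_cases hle' : RelLE θ₂ θ₁
  · have h := hm₂ θ₁ h₁ hp₁ hle'
    exact fun x y => ⟨fun hh => h x y hh, fun hh => hle' x y hh⟩
  exfalso
  simp only [RelLE, not_forall] at hle hle'
  obtain ⟨a, b, hab1, hab2⟩ := hle
  obtain ⟨c, d, hcd2, hcd1⟩ := hle'
  -- the join of θ₁ and θ₂ is a congruence strictly above θ₁, hence full
  set θ₃ : α → α → Prop := fun x y => ∃ m, θ₁ x m ∧ θ₂ m y with hθ₃
  have h₃ : IsCong f θ₃ := aux9_join f hmin h₁ h₂
  have hfull : ∀ x y, θ₃ x y := by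
    by_contra hnf
    have hle₃ : RelLE θ₁ θ₃ := fun x y h => ⟨y, h, h₂.1.refl y⟩
    have := hm₁ θ₃ h₃ hnf hle₃ c d ⟨c, h₁.1.refl c, hcd2⟩
    exact hcd1 this
  by_cases hr : ∃ r, θ₂ a r ∧ ¬ θ₁ a r
  · obtain ⟨r, hr2, hr1⟩ := hr
    exact aux9_grid f hcons hmin h₁ h₂ hab1 hab2 hr2 hr1
  · push_neg at hr
    obtain ⟨m, hcm, hma⟩ := hfull c a
    have hca : θ₁ c a := h₁.1.trans hcm (h₁.1.symm (hr m (h₂.1.symm hma)))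
    obtain ⟨m', hdm', hm'a⟩ := hfull d a
    have hda : θ₁ d a := h₁.1.trans hdm' (h₁.1.symm (hr m' (h₂.1.symm hm'a)))
    exact hcd1 (h₁.1.trans hca (h₁.1.symm hda))

end AuxStmt9

/-- A finite conservative minority algebra with at least two elements has a
unique maximal proper congruence. -/
theorem stmt_9 {α : Type*} [Fintype α] (hcard : 2 ≤ Fintype.card α)
    (f : α → α → α → α)
    (hcons : IsConservativeOp f) (hmin : IsMinorityOp f) :
    ∃ θ : α → α → Prop,
      (IsCong f θ ∧ ¬(∀ x y, θ x y) ∧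
        ∀ θ' : α → α → Prop, IsCong f θ' → ¬(∀ x y, θ' x y) →
          RelLE θ θ' → RelLE θ' θ) ∧
      ∀ θ' : α → α → Prop,
        (IsCong f θ' ∧ ¬(∀ x y, θ' x y) ∧
          ∀ θ'' : α → α → Prop, IsCong f θ'' → ¬(∀ x y, θ'' x y) →
            RelLE θ' θ'' → RelLE θ'' θ') →
        ∀ x y, θ' x y ↔ θ x y := by
  classical
  set S : Set (α → α → Prop) := {θ | IsCong f θ ∧ ¬ ∀ x y, θ x y} with hS
  have hSfin : S.Finite := Set.toFinite S
  have hSne : S.Nonempty := by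
    refine ⟨Eq, ⟨⟨eq_equivalence, ?_⟩, ?_⟩⟩
    · intro a₁ b₁ a₂ b₂ a₃ b₃ h1 h2 h3; rw [h1, h2, h3]
    · have : Nontrivial α := Fintype.one_lt_card_iff_nontrivial.mp hcard
      obtain ⟨x, y, hxy⟩ := exists_pair_ne α
      exact fun h => hxy (h x y)
  set g : (α → α → Prop) → ℕ :=
    fun θ => (Finset.univ.filter fun p : α × α => θ p.1 p.2).card with hg
  obtain ⟨θ, hθS, hmax⟩ := Set.Finite.exists_maximalFor g S hSfin hSne
  have hmono : ∀ θ₁ θ₂ : α → α → Prop, RelLE θ₁ θ₂ →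
      (Finset.univ.filter fun p : α × α => θ₁ p.1 p.2) ⊆
        (Finset.univ.filter fun p : α × α => θ₂ p.1 p.2) := by
    intro θ₁ θ₂ hle p hp
    simp only [Finset.mem_filter, Finset.mem_univ, true_and] at hp ⊢
    exact hle _ _ hp
  have hmaxrel : ∀ θ' : α → α → Prop, IsCong f θ' → ¬(∀ x y, θ' x y) →
      RelLE θ θ' → RelLE θ' θ := by
    intro θ' hc hp hle x y hxy
    have hsub := hmono θ θ' hle
    have hcard' := hmax (j := θ') ⟨hc, hp⟩ (Finset.card_le_card hsub)
    have heq := Finset.eq_of_subset_of_card_le hsub hcard'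
    have : (x, y) ∈ (Finset.univ.filter fun p : α × α => θ' p.1 p.2) := by
      simp only [Finset.mem_filter, Finset.mem_univ, true_and]; exact hxy
    rw [← heq] at this
    simpa using this
  refine ⟨θ, ⟨hθS.1, hθS.2, hmaxrel⟩, ?_⟩
  rintro θ' ⟨hc', hp', hm'⟩
  exact aux9_maxEq f hcons hmin hc' hp' hm' hθS.1 hθS.2 hmaxrel
end

section
/- Let A and B be sets equipped with Maltsev operations f_A : A³ → A and f_B : B³ → B, and let R ⊆ A × B be subdirect (both projections of R are surjective) and invariant (whenever (a₁,b₁), (a₂,b₂), (a₃,b₃) ∈ R, also (f_A(a₁,a₂,a₃), f_B(b₁,b₂,b₃)) ∈ R). Then C₁ := {(a,a') ∈ A² : ∃ b ∈ B, (a,b) ∈ R and (a',b) ∈ R} is a congruence of (A;f_A), C₂ := {(b,b') ∈ B² : ∃ a ∈ A, (a,b) ∈ R and (a,b') ∈ R} is a congruence of (B;f_B), and there is a bijection η from the set of C₁-classes of A to the set of C₂-classes of B such that η([a]_{C₁}) = [b]_{C₂} for every (a,b) ∈ R and η commutes with the induced quotient operations (η(f̄_A(x,y,z)) = f̄_B(η(x),η(y),η(z))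 for all C₁-classes x,y,z, where f̄_A and f̄_B are the well-defined operations induced by f_A and f_B on the quotients). -/
/-- The first coordinate kernel `R ∘ R⁻¹` of a binary relation. -/
def kerFst {α β : Type*} (R : Set (α × β)) : α → α → Prop :=
  fun a a' => ∃ b, (a, b) ∈ R ∧ (a', b) ∈ R

/-- The second coordinate kernel `R⁻¹ ∘ R` of a binary relation. -/
def kerSnd {α β : Type*} (R : Set (α × β)) : β → β → Prop :=
  fun b b' => ∃ a, (a, b) ∈ R ∧ (a, b') ∈ R

/-- For a subdirect invariant binary relation `R` between two Maltsev algebras,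
the coordinate kernels are congruences and the quotients are isomorphic via
the map `[a] ↦ [b]` for `(a, b) ∈ R`. -/
theorem stmt_10 {α β : Type*} (fA : α → α → α → α) (fB : β → β → β → β)
    (hA : IsMaltsevOp fA) (hB : IsMaltsevOp fB)
    (R : Set (α × β))
    (hsub₁ : ∀ a, ∃ b, (a, b) ∈ R) (hsub₂ : ∀ b, ∃ a, (a, b) ∈ R)
    (hinv : ∀ p q r, p ∈ R → q ∈ R → r ∈ R →
        (fA p.1 q.1 r.1, fB p.2 q.2 r.2) ∈ R) :
    IsCong fA (kerFst R) ∧ IsCong fB (kerSnd R) ∧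
    ∃ η : Set α → Set β,
      Set.BijOn η (Set.range (fun a => {x | kerFst R a x}))
        (Set.range (fun b => {y | kerSnd R b y})) ∧
      (∀ a b, (a, b) ∈ R → η {x | kerFst R a x} = {y | kerSnd R b y}) ∧
      (∀ a₁ a₂ a₃ b₁ b₂ b₃,
        η {x | kerFst R a₁ x} = {y | kerSnd R b₁ y} →
        η {x | kerFst R a₂ x} = {y | kerSnd R b₂ y} →
        η {x | kerFst R a₃ x} = {y | kerSnd R b₃ y} →
        η {x | kerFst R (fA a₁ a₂ a₃) x} = {y | kerSnd R (fB b₁ b₂ b₃) y}) := by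
  -- Key lemma: R is "linked" along kerFst
  have L1 : ∀ a a' b, (a, b) ∈ R → kerFst R a a' → (a', b) ∈ R := by
    rintro a a' b hab ⟨b₀, h1, h2⟩
    have := hinv (a', b₀) (a, b₀) (a, b) h2 h1 hab
    simpa [(hA a a').2, (hB b₀ b).1] using this
  have L2 : ∀ a b b', (a, b) ∈ R → kerSnd R b b' → (a, b') ∈ R := by
    rintro a b b' hab ⟨a₀, h1, h2⟩
    have := hinv (a, b) (a₀, b) (a₀, b') hab h1 h2
    simpa [(hA a₀ a).2, (hB b b').1] using this
  have reflF : ∀ a, kerFst R a a := fun a => by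
    obtain ⟨b, h⟩ := hsub₁ a; exact ⟨b, h, h⟩
  have symmF : ∀ {a a'}, kerFst R a a' → kerFst R a' a := by
    rintro a a' ⟨b, h1, h2⟩; exact ⟨b, h2, h1⟩
  have transF : ∀ {a a' a''}, kerFst R a a' → kerFst R a' a'' → kerFst R a a'' := by
    rintro a a' a'' h ⟨b', h1, h2⟩
    exact ⟨b', L1 a' a b' h1 (symmF h), h2⟩
  have reflS : ∀ b, kerSnd R b b := fun b => by
    obtain ⟨a, h⟩ := hsub₂ b; exact ⟨a, h, h⟩
  have symmS : ∀ {b b'}, kerSnd R b b' → kerSnd R b' b := by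
    rintro b b' ⟨a, h1, h2⟩; exact ⟨a, h2, h1⟩
  have transS : ∀ {b b' b''}, kerSnd R b b' → kerSnd R b' b'' → kerSnd R b b'' := by
    rintro b b' b'' h ⟨a', h1, h2⟩
    exact ⟨a', L2 a' b' b h1 (symmS h), h2⟩
  have congF : IsCong fA (kerFst R) := by
    refine ⟨⟨reflF, symmF, transF⟩, ?_⟩
    rintro a₁ c₁ a₂ c₂ a₃ c₃ ⟨b₁, h11, h12⟩ ⟨b₂, h21, h22⟩ ⟨b₃, h31, h32⟩
    exact ⟨fB b₁ b₂ b₃, hinv (a₁, b₁) (a₂, b₂) (a₃, b₃) h11 h21 h31,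
      hinv (c₁, b₁) (c₂, b₂) (c₃, b₃) h12 h22 h32⟩
  have congS : IsCong fB (kerSnd R) := by
    refine ⟨⟨reflS, symmS, transS⟩, ?_⟩
    rintro b₁ c₁ b₂ c₂ b₃ c₃ ⟨a₁, h11, h12⟩ ⟨a₂, h21, h22⟩ ⟨a₃, h31, h32⟩
    exact ⟨fA a₁ a₂ a₃, hinv (a₁, b₁) (a₂, b₂) (a₃, b₃) h11 h21 h31,
      hinv (a₁, c₁) (a₂, c₂) (a₃, c₃) h12 h22 h32⟩
  have classEqF : ∀ {a a'}, kerFst R a a' →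
      ({x | kerFst R a x} : Set α) = {x | kerFst R a' x} := by
    intro a a' h
    ext x
    exact ⟨fun hx => transF (symmF h) hx, fun hx => transF h hx⟩
  refine ⟨congF, congS, fun S => {y | ∃ a ∈ S, (a, y) ∈ R}, ?_, ?_, ?_⟩
  case refine_2 =>
    intro a b hab
    ext y
    constructor
    · rintro ⟨a', haa', ha'y⟩
      exact ⟨a, hab, L1 a' a y ha'y (symmF haa')⟩
    · rintro ⟨a₀, h1, h2⟩
      exact ⟨a₀, ⟨b, hab, h1⟩, h2⟩
  all_goals
    have hK : ∀ a b, (a, b) ∈ R →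
        {y | ∃ a' ∈ ({x | kerFst R a x} : Set α), (a', y) ∈ R}
          = {y | kerSnd R b y} := by
      intro a b hab
      ext y
      constructor
      · rintro ⟨a', haa', ha'y⟩
        exact ⟨a, hab, L1 a' a y ha'y (symmF haa')⟩
      · rintro ⟨a₀, h1, h2⟩
        exact ⟨a₀, ⟨b, hab, h1⟩, h2⟩
  case refine_1 =>
    refine ⟨?_, ?_, ?_⟩
    · rintro _ ⟨a, rfl⟩
      obtain ⟨b, hab⟩ := hsub₁ a
      exact ⟨b, (hK a b hab).symm⟩
    · rintro _ ⟨a, rfl⟩ _ ⟨a', rfl⟩ h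
      obtain ⟨b, hab⟩ := hsub₁ a
      obtain ⟨b', hab'⟩ := hsub₁ a'
      have h2 : ({y | kerSnd R b y} : Set β) = {y | kerSnd R b' y} := by
        rw [← hK a b hab, ← hK a' b' hab']; exact h
      have hbb' : kerSnd R b b' := by
        have : b' ∈ ({y | kerSnd R b y} : Set β) := by rw [h2]; exact reflS b'
        exact this
      obtain ⟨a'', h1, h2⟩ := hbb'
      exact classEqF (transF ⟨b, hab, h1⟩ ⟨b', h2, hab'⟩)
    · rintro _ ⟨b, rfl⟩
      obtain ⟨a, hab⟩ := hsub₂ b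
      exact ⟨{x | kerFst R a x}, ⟨a, rfl⟩, hK a b hab⟩
  case refine_3 =>
    have hK' : ∀ a b,
        {y | ∃ a' ∈ ({x | kerFst R a x} : Set α), (a', y) ∈ R}
          = {y | kerSnd R b y} → (a, b) ∈ R := by
      intro a b h
      obtain ⟨c, hac⟩ := hsub₁ a
      have h2 : ({y | kerSnd R c y} : Set β) = {y | kerSnd R b y} := by
        rw [← hK a c hac]; exact h
      have hcb : kerSnd R c b := by
        have : b ∈ ({y | kerSnd R c y} : Set β) := by rw [h2]; exact reflS b
        exact this
      exact L2 a c b hac hcb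
    intro a₁ a₂ a₃ b₁ b₂ b₃ h1 h2 h3
    exact hK _ _ (hinv (a₁, b₁) (a₂, b₂) (a₃, b₃) (hK' _ _ h1) (hK' _ _ h2) (hK' _ _ h3))
end

section
/- Let n ≥ 2 and for each i ∈ {1,…,n} let A_i be a finite set with a conservative minority operation f_i. Let R ⊆ A₁ × ⋯ × Aₙ be subdirect, functional, and multisorted critical with critical tuple s. Then each (A_i; f_i) is subdirectly irreducible, and for every i and every i-approximation t ∈ R of s, the monolith of (A_i; f_i) equals the smallest congruence of (A_i; f_i) containing the pair (s_i, t_i). -/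
/-- For a subdirect functional multisorted critical relation `R` with critical
tuple `s` over conservative minority algebras, every factor is subdirectly
irreducible and its monolith is the congruence generated by `(s i, t i)` for
any `i`-approximation `t` of `s`. -/
theorem stmt_12 (n : ℕ) (hn : 2 ≤ n) (A : Fin n → Type*)
    [∀ i, Fintype (A i)] (f : ∀ i, A i → A i → A i → A i)
    (hcons : ∀ i, IsConservativeOp (f i)) (hmin : ∀ i, IsMinorityOp (f i))
    (R : Set (∀ i, A i))
    (hinv : ∀ t₁ t₂ t₃, t₁ ∈ R → t₂ ∈ R → t₃ ∈ R →
        (fun i => f i (t₁ i) (t₂ i) (t₃ i)) ∈ R)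
    (hsub : ∀ (i : Fin n) (a : A i), ∃ t ∈ R, t i = a)
    (hfun : ∀ t ∈ R, ∀ t' ∈ R, ∀ i : Fin n,
        (∀ j, j ≠ i → t j = t' j) → t = t')
    (s : ∀ i, A i) (hs : s ∉ R)
    (hmax : ∀ S : Set (∀ i, A i),
        (∀ t₁ t₂ t₃, t₁ ∈ S → t₂ ∈ S → t₃ ∈ S →
          (fun i => f i (t₁ i) (t₂ i) (t₃ i)) ∈ S) →
        R ⊂ S → s ∈ S)
    (happ : ∀ i : Fin n, ∃ t ∈ R, ∀ j, j ≠ i → t j = s j) :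
    ∀ i : Fin n,
      IsSubdirectlyIrred (f i) ∧
      ∀ t ∈ R, (∀ j, j ≠ i → t j = s j) →
        ∀ μ : A i → A i → Prop, IsAtomicCong (f i) μ →
          ∀ x y, μ x y ↔
            ∀ ψ : A i → A i → Prop, IsCong (f i) ψ → ψ (s i) (t i) → ψ x y := by
  
  classical
  intro i
  -- Key lemma: every nontrivial congruence of `(A i; f i)` relates `s i` and `t i`
  -- for any `i`-approximation `t`.
  have key : ∀ θ : A i → A i → Prop, IsCong (f i) θ → NontrivialRel θ →
      ∀ t ∈ R, (∀ j, j ≠ i → t j = s j) → θ (s i) (t i) := by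
    rintro θ hθ ⟨a, b, hab, hne⟩ t ht hts
    obtain ⟨r₀, hr₀, hr₀i⟩ := hsub i a
    set S : Set (∀ j, A j) :=
      {u | ∃ r ∈ R, (∀ j, j ≠ i → u j = r j) ∧ θ (u i) (r i)} with hSdef
    have hRS : R ⊆ S := fun r hr => ⟨r, hr, fun _ _ => rfl, hθ.1.refl _⟩
    have hSinv : ∀ t₁ t₂ t₃, t₁ ∈ S → t₂ ∈ S → t₃ ∈ S →
        (fun j => f j (t₁ j) (t₂ j) (t₃ j)) ∈ S := by
      rintro u₁ u₂ u₃ ⟨r₁, hr₁, ha₁, hb₁⟩ ⟨r₂, hr₂, ha₂, hb₂⟩ ⟨r₃, hr₃, ha₃, hb₃⟩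
      exact ⟨fun j => f j (r₁ j) (r₂ j) (r₃ j), hinv _ _ _ hr₁ hr₂ hr₃,
        fun j hj => by simp only [ha₁ j hj, ha₂ j hj, ha₃ j hj],
        hθ.2 _ _ _ _ _ _ hb₁ hb₂ hb₃⟩
    have huS : Function.update r₀ i b ∈ S :=
      ⟨r₀, hr₀, fun j hj => Function.update_of_ne hj _ _, by
        rw [Function.update_self, hr₀i]; exact hθ.1.symm hab⟩
    have huR : Function.update r₀ i b ∉ R := by
      intro hmem
      have heq := hfun _ hmem r₀ hr₀ i (fun j hj => Function.update_of_ne hj _ _)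
      apply hne
      have : Function.update r₀ i b i = r₀ i := by rw [heq]
      rw [Function.update_self] at this
      rw [← hr₀i, ← this]
    have hss : R ⊂ S := Set.ssubset_iff_subset_ne.mpr
      ⟨hRS, fun h => huR (h ▸ huS)⟩
    obtain ⟨r, hr, hag, hθr⟩ := hmax S hSinv hss
    have hrt : r = t := hfun r hr t ht i
      (fun j hj => by rw [← hag j hj, hts j hj])
    rw [← hrt]
    exact hθr
  -- The congruence generated by `(s i, c)`.
  have Cgcong : ∀ c : A i,
      IsCong (f i) (fun x y => ∀ ψ, IsCong (f i) ψ → ψ (s i) c → ψ x y) := by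
    intro c
    refine ⟨⟨fun x ψ hψ _ => hψ.1.refl x,
      fun h ψ hψ hc => hψ.1.symm (h ψ hψ hc),
      fun h₁ h₂ ψ hψ hc => hψ.1.trans (h₁ ψ hψ hc) (h₂ ψ hψ hc)⟩, ?_⟩
    intro a₁ b₁ a₂ b₂ a₃ b₃ h₁ h₂ h₃ ψ hψ hc
    exact hψ.2 _ _ _ _ _ _ (h₁ ψ hψ hc) (h₂ ψ hψ hc) (h₃ ψ hψ hc)
  -- Approximations give distinct pairs.
  have hneq : ∀ t ∈ R, (∀ j, j ≠ i → t j = s j) → s i ≠ t i := by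
    intro t ht hts h
    apply hs
    have : s = t := funext fun j => by
      by_cases hj : j = i
      · subst hj; exact h
      · exact (hts j hj).symm
    rw [this]; exact ht
  have CgNT : ∀ t ∈ R, (∀ j, j ≠ i → t j = s j) →
      NontrivialRel (fun x y => ∀ ψ, IsCong (f i) ψ → ψ (s i) (t i) → ψ x y) :=
    fun t ht hts => ⟨s i, t i, fun ψ _ h => h, hneq t ht hts⟩
  -- The generated congruence is atomic.
  have CgAtomic : ∀ t ∈ R, (∀ j, j ≠ i → t j = s j) →
      IsAtomicCong (f i)
        (fun x y => ∀ ψ, IsCong (f i) ψ → ψ (s i) (t i) → ψ x y) := by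
    intro t ht hts
    refine ⟨Cgcong _, CgNT t ht hts, ?_⟩
    intro θ' hc hnt hle x y
    constructor
    · exact hle x y
    · intro h
      exact h θ' hc (key θ' hc hnt t ht hts)
  obtain ⟨t₀, ht₀, ht₀s⟩ := happ i
  have ht₀s' : ∀ j, j ≠ i → t₀ j = s j := ht₀s
  constructor
  · -- subdirect irreducibility
    refine ⟨_, CgAtomic t₀ ht₀ ht₀s', ?_⟩
    intro θ' hθ' x y
    have hle : RelLE (fun x y => ∀ ψ, IsCong (f i) ψ → ψ (s i) (t₀ i) → ψ x y) θ' :=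
      fun x y h => h θ' hθ'.1 (key θ' hθ'.1 hθ'.2.1 t₀ ht₀ ht₀s')
    exact (hθ'.2.2 _ (Cgcong _) (CgNT t₀ ht₀ ht₀s') hle x y).symm
  · intro t ht hts μ hμ x y
    have hle : RelLE (fun x y => ∀ ψ, IsCong (f i) ψ → ψ (s i) (t i) → ψ x y) μ :=
      fun x y h => h μ hμ.1 (key μ hμ.1 hμ.2.1 t ht hts)
    exact (hμ.2.2 _ (Cgcong _) (CgNT t ht hts) hle x y).symm
end

section
/- Let A be a finite set with a conservative minority operation f, let n ≥ 2, let R ⊆ Aⁿ be invariant under f, and set A_i := π_i(R) for 1 ≤ i ≤ n. Let θ_i be the i-th coordinate kernel of R. Then: (0) each θ_i is a congruence of (A_i; f); (1) if (a₁,…,aₙ) ∈ R and (a_i, b_i) ∈ θ_i for all i, then (b₁,…,bₙ) ∈ R; (2) the induced relation R̄ := {([a₁]_{θ₁},…,[aₙ]_{θₙ}) : (a₁,…,aₙ) ∈ R} on (A₁/θ₁) × ⋯ × (Aₙ/θₙ) is functional and subdirect; and (3) if moreover R is critical, then R̄ is multisorted critical with respect to the operations induced by f on the quotients A_i/θ_i.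 -/
/-- An atomic congruence of the subalgebra `(B; f)`. -/
def IsAtomicCongOn {α : Type*} (f : α → α → α → α) (B : Set α)
    (θ : α → α → Prop) : Prop :=
  IsCongOn f B θ ∧ NontrivialRel θ ∧
    ∀ θ' : α → α → Prop, IsCongOn f B θ' → NontrivialRel θ' → RelLE θ' θ →
      ∀ x y, θ' x y ↔ θ x y

/-- The subalgebra `(B; f)` is subdirectly irreducible. -/
def IsSIOn {α : Type*} (f : α → α → α → α) (B : Set α) : Prop :=
  ∃ μ : α → α → Prop, IsAtomicCongOn f B μ ∧
    ∀ μ' : α → α → Prop, IsAtomicCongOn f B μ' → ∀ x y, μ' x y ↔ μ x y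

/-- The projection of `R` onto coordinate `i`. -/
def projCoord {α : Type*} {n : ℕ} (R : Set (Fin n → α)) (i : Fin n) : Set α :=
  {a | ∃ t ∈ R, t i = a}

/-- The `i`-th coordinate kernel of `R`. -/
def coordKer {α : Type*} {n : ℕ} (R : Set (Fin n → α)) (i : Fin n) :
    α → α → Prop :=
  fun a a' => ∃ t ∈ R, ∃ t' ∈ R, t i = a ∧ t' i = a' ∧ ∀ j, j ≠ i → t j = t' j

section Aux

variable {α : Type*} {f : α → α → α → α} {n : ℕ} {R : Set (Fin n → α)}

/-- Key update lemma: if `t ∈ R` and `(t i, b)` is in the `i`-th kernel, then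
    updating `t` at `i` to `b` stays in `R`. -/
lemma aux_ker_update (hmin : IsMinorityOp f) (hR : PreservesSet f R)
    {t : Fin n → α} (ht : t ∈ R) {i : Fin n} {b : α}
    (h : coordKer R i (t i) b) : Function.update t i b ∈ R := by
  obtain ⟨s, hs, s', hs', hsi, hs'i, hagree⟩ := h
  have hmem := hR t s s' ht hs hs'
  have heq : Function.update t i b = (fun j => f (t j) (s j) (s' j)) := by
    funext j
    by_cases hj : j = i
    · subst hj
      rw [Function.update_self, hsi, hs'i, (hmin (t j) b).1]
    · rw [Function.update_of_ne hj, hagree j hj, (hmin (s' j) (t j)).2.2]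
  rw [heq]; exact hmem

/-- Saturation: `R` is saturated w.r.t. the product of its coordinate kernels. -/
lemma aux_saturate (hmin : IsMinorityOp f) (hR : PreservesSet f R)
    {t : Fin n → α} (ht : t ∈ R) (t' : Fin n → α)
    (hk : ∀ i, coordKer R i (t i) (t' i)) : t' ∈ R := by
  have key : ∀ m : ℕ, (fun i : Fin n => if (i : ℕ) < m then t' i else t i) ∈ R := by
    intro m
    induction m with
    | zero => simpa using ht
    | succ m ih =>
      by_cases hm : m < n
      · set im : Fin n := ⟨m, hm⟩ with him
        set g : Fin n → α := fun i : Fin n => if (i : ℕ) < m then t' i else t i with hg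
        have hgim : g im = t im := by simp [hg, him]
        have hker : coordKer R im (g im) (t' im) := by rw [hgim]; exact hk im
        have hup := aux_ker_update hmin hR ih hker
        have heq : Function.update g im (t' im) =
            (fun i : Fin n => if (i : ℕ) < m + 1 then t' i else t i) := by
          funext j
          by_cases hj : j = im
          · subst hj
            simp [Function.update_self, him]
          · have hjm : (j : ℕ) ≠ m := by
              intro hc
              exact hj (Fin.ext hc)
            rw [Function.update_of_ne hj]
            simp only [hg]
            by_cases h : (j : ℕ) < m
            · simp [h, Nat.lt_succ_of_lt h]
            · simp [h, show ¬((j : ℕ) < m + 1) by omega]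
        rw [← heq]; exact hup
      · have heq : (fun i : Fin n => if (i : ℕ) < m + 1 then t' i else t i) =
            (fun i : Fin n => if (i : ℕ) < m then t' i else t i) := by
          funext j
          have h1 : (j : ℕ) < m := lt_of_lt_of_le j.isLt (le_of_not_gt hm)
          simp [h1, Nat.lt_succ_of_lt h1]
        rw [heq]; exact ih
  have := key n
  have heq : (fun i : Fin n => if (i : ℕ) < n then t' i else t i) = t' := by
    funext j; simp [j.isLt]
  rwa [heq] at this

/-- Reflexivity of the kernel on the projection. -/
lemma aux_ker_refl {i : Fin n} {a : α} (ha : a ∈ projCoord R i) :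
    coordKer R i a a := by
  obtain ⟨t, ht, hti⟩ := ha
  exact ⟨t, ht, t, ht, hti, hti, fun _ _ => rfl⟩

end Aux

/-- Lemma on coordinate kernels and the reduced representation `R̄` of `R`:
(0) each coordinate kernel is a congruence of the corresponding projection;
(1) `R` is saturated with respect to the product of its coordinate kernels;
(2) the induced relation `R̄` on the quotients is functional and subdirect
    (stated via representatives);
(3) if `R` is critical, then `R̄` is multisorted critical (stated via
    saturated invariant relations and representatives). -/
theorem stmt_13 {α : Type*} [Fintype α] (f : α → α → α → α)
    (hcons : IsConservativeOp f) (hmin : IsMinorityOp f)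
    (n : ℕ) (hn : 2 ≤ n) (R : Set (Fin n → α)) (hR : PreservesSet f R) :
    (∀ i : Fin n, IsCongOn f (projCoord R i) (coordKer R i)) ∧
    (∀ t ∈ R, ∀ t' : Fin n → α, (∀ i, coordKer R i (t i) (t' i)) → t' ∈ R) ∧
    ((∀ t ∈ R, ∀ t' ∈ R, ∀ i : Fin n,
        (∀ j, j ≠ i → coordKer R j (t j) (t' j)) →
        ∀ j, coordKer R j (t j) (t' j)) ∧
      (∀ (i : Fin n), ∀ a ∈ projCoord R i, ∃ t ∈ R, coordKer R i (t i) a)) ∧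
    (((∀ i : Fin n, ¬ ∀ t ∈ R, ∀ b : α, Function.update t i b ∈ R) ∧
        R ⊂ ⋂₀ {S : Set (Fin n → α) | PreservesSet f S ∧ R ⊂ S}) →
      ∃ s : Fin n → α, (∀ i, s i ∈ projCoord R i) ∧
        (¬ ∃ t ∈ R, ∀ i, coordKer R i (t i) (s i)) ∧
        (∀ S : Set (Fin n → α), (∀ t ∈ S, ∀ i, t i ∈ projCoord R i) →
          PreservesSet f S →
          (∀ t ∈ S, ∀ t' : Fin n → α,
            (∀ i, coordKer R i (t i) (t' i)) → t' ∈ S) →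
          R ⊂ S → ∃ t ∈ S, ∀ i, coordKer R i (t i) (s i)) ∧
        (∀ i : Fin n, ∃ t ∈ R, ∀ j, j ≠ i → coordKer R j (t j) (s j))) := by
  refine ⟨?_, ?_, ⟨?_, ?_⟩, ?_⟩
  · -- (0) each kernel is a congruence on the projection
    intro i
    refine ⟨?_, ?_, ?_, ?_, ?_⟩
    · rintro x y ⟨t, ht, t', ht', hti, ht'i, -⟩
      exact ⟨⟨t, ht, hti⟩, ⟨t', ht', ht'i⟩⟩
    · intro x hx; exact aux_ker_refl hx
    · rintro x y ⟨t, ht, t', ht', hti, ht'i, hag⟩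
      exact ⟨t', ht', t, ht, ht'i, hti, fun j hj => (hag j hj).symm⟩
    · rintro x y z ⟨t, ht, t', ht', hti, ht'i, hag⟩ ⟨u, hu, u', hu', hui, hu'i, hag'⟩
      refine ⟨t, ht, fun j => f (u' j) (u j) (t' j), hR u' u t' hu' hu ht', hti, ?_, ?_⟩
      · show f (u' i) (u i) (t' i) = z
        rw [hu'i, hui, ht'i, (hmin y z).2.2]
      · intro j hj
        show t j = f (u' j) (u j) (t' j)
        rw [hag j hj, ← hag' j hj, (hmin (u j) (t' j)).1]
    · rintro a₁ b₁ a₂ b₂ a₃ b₃ ⟨t₁, ht₁, t₁', ht₁', h₁, h₁', hag₁⟩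
        ⟨t₂, ht₂, t₂', ht₂', h₂, h₂', hag₂⟩ ⟨t₃, ht₃, t₃', ht₃', h₃, h₃', hag₃⟩
      refine ⟨fun j => f (t₁ j) (t₂ j) (t₃ j), hR _ _ _ ht₁ ht₂ ht₃,
        fun j => f (t₁' j) (t₂' j) (t₃' j), hR _ _ _ ht₁' ht₂' ht₃', ?_, ?_, ?_⟩
      · show f (t₁ i) (t₂ i) (t₃ i) = _; rw [h₁, h₂, h₃]
      · show f (t₁' i) (t₂' i) (t₃' i) = _; rw [h₁', h₂', h₃']
      · intro j hj
        show f (t₁ j) (t₂ j) (t₃ j) = f (t₁' j) (t₂' j) (t₃' j)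
        rw [hag₁ j hj, hag₂ j hj, hag₃ j hj]
  · -- (1) saturation
    intro t ht t' hk
    exact aux_saturate hmin hR ht t' hk
  · -- (2a) functionality
    intro t ht t' ht' i hk
    have hmem : (fun j => if j = i then t i else t' j) ∈ R := by
      refine aux_saturate hmin hR ht _ (fun j => ?_)
      by_cases hj : j = i
      · subst hj; simp only [if_pos rfl]
        exact aux_ker_refl ⟨t, ht, rfl⟩
      · simp only [if_neg hj]
        exact hk j hj
    have hki : coordKer R i (t i) (t' i) :=
      ⟨_, hmem, t', ht', by simp, rfl, fun j hj => by simp [if_neg hj]⟩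
    intro j
    by_cases hj : j = i
    · subst hj; exact hki
    · exact hk j hj
  · -- (2b) subdirectness
    rintro i a ⟨t, ht, hti⟩
    exact ⟨t, ht, by rw [hti]; exact aux_ker_refl ⟨t, ht, hti⟩⟩
  · -- (3) criticality
    rintro ⟨hnodummy, hcrit⟩
    obtain ⟨s, hsInter, hsR⟩ := Set.exists_of_ssubset hcrit
    -- for each i, an i-approximation of s in R
    have happrox : ∀ i : Fin n, ∃ t ∈ R, ∀ j, j ≠ i → t j = s j := by
      intro i
      set Si : Set (Fin n → α) := {u | ∃ t ∈ R, ∀ j, j ≠ i → u j = t j} with hSi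
      have hSipres : PreservesSet f Si := by
        rintro u₁ u₂ u₃ ⟨t₁, ht₁, hag₁⟩ ⟨t₂, ht₂, hag₂⟩ ⟨t₃, ht₃, hag₃⟩
        refine ⟨fun j => f (t₁ j) (t₂ j) (t₃ j), hR _ _ _ ht₁ ht₂ ht₃, fun j hj => ?_⟩
        show f (u₁ j) (u₂ j) (u₃ j) = f (t₁ j) (t₂ j) (t₃ j)
        rw [hag₁ j hj, hag₂ j hj, hag₃ j hj]
      have hsub : R ⊆ Si := fun t ht => ⟨t, ht, fun _ _ => rfl⟩
      have hne : R ≠ Si := by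
        intro hEq
        refine hnodummy i (fun t ht b => ?_)
        rw [hEq]
        exact ⟨t, ht, fun j hj => Function.update_of_ne hj b t⟩
      have hsSi : s ∈ Si := hsInter Si ⟨hSipres, ⟨hsub, fun h => hne (le_antisymm hsub h)⟩⟩
      obtain ⟨t, ht, hag⟩ := hsSi
      exact ⟨t, ht, fun j hj => (hag j hj).symm⟩
    have hproj : ∀ j : Fin n, s j ∈ projCoord R j := by
      intro j
      obtain ⟨i, hi⟩ : ∃ i : Fin n, i ≠ j := by
        rcases Decidable.eq_or_ne j ⟨0, by omega⟩ with hj | hj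
        · exact ⟨⟨1, by omega⟩, by rw [hj]; intro h; exact absurd (Fin.val_eq_of_eq h) (by simp)⟩
        · exact ⟨⟨0, by omega⟩, fun h => hj h.symm⟩
      obtain ⟨t, ht, hag⟩ := happrox i
      exact ⟨t, ht, hag j (fun h => hi h.symm)⟩
    refine ⟨s, hproj, ?_, ?_, ?_⟩
    · rintro ⟨t, ht, hk⟩
      exact hsR (aux_saturate hmin hR ht s hk)
    · intro S _ hSpres _ hRS
      have hsS : s ∈ S := hsInter S ⟨hSpres, hRS⟩
      exact ⟨s, hsS, fun i => aux_ker_refl (hproj i)⟩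
    · intro i
      obtain ⟨t, ht, hag⟩ := happrox i
      refine ⟨t, ht, fun j hj => ?_⟩
      rw [hag j hj]
      exact aux_ker_refl (hproj j)
end

section
/- Let A be a finite set with a conservative minority operation f, let n ≥ 3, let A₁,…,Aₙ ⊆ A be subsets such that each subalgebra (A_i;f) is subdirectly irreducible, and let R ⊆ A₁ × ⋯ × Aₙ be a subdirect, functional, multisorted critical relation. For each i let B_i be the nontrivial block of the monolith μ_i of (A_i;f). Then |B_i| = 2 for every i ∈ {1,…,n}. -/
private lemma stmt15_exists_two_ne {n : ℕ} (hn : 3 ≤ n) (j : Fin n) :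
    ∃ k l : Fin n, k ≠ j ∧ l ≠ j ∧ k ≠ l := by
  have h0 : 0 < n := by omega
  have h1 : 1 < n := by omega
  have h2 : 2 < n := by omega
  by_cases hj0 : j = ⟨0, h0⟩
  · refine ⟨⟨1, h1⟩, ⟨2, h2⟩, ?_, ?_, ?_⟩ <;> simp [hj0, Fin.ext_iff]
  · by_cases hj1 : j = ⟨1, h1⟩
    · refine ⟨⟨0, h0⟩, ⟨2, h2⟩, ?_, ?_, ?_⟩ <;> simp [hj1, Fin.ext_iff]
    · refine ⟨⟨0, h0⟩, ⟨1, h1⟩, fun h => hj0 h.symm, fun h => hj1 h.symm, ?_⟩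
      simp [Fin.ext_iff]
/-- For a subdirect functional multisorted critical relation of arity `n ≥ 3`
over subdirectly irreducible subalgebras of a finite conservative minority
algebra, the nontrivial block of each monolith has exactly two elements. -/
theorem stmt_15 {α : Type*} [Fintype α] (f : α → α → α → α)
    (hcons : IsConservativeOp f) (hmin : IsMinorityOp f)
    (n : ℕ) (hn : 3 ≤ n) (A : Fin n → Set α)
    (μ : Fin n → α → α → Prop)
    (hμ : ∀ i, IsAtomicCongOn f (A i) (μ i))
    (hSI : ∀ i, ∀ μ' : α → α → Prop, IsAtomicCongOn f (A i) μ' →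
        ∀ x y, μ' x y ↔ μ i x y)
    (B : Fin n → Set α)
    (hB : ∀ i, ∃ x y, x ≠ y ∧ μ i x y ∧ B i = {z | μ i x z})
    (R : Set (Fin n → α))
    (hdom : ∀ t ∈ R, ∀ i, t i ∈ A i)
    (hinv : PreservesSet f R)
    (hsub : ∀ (i : Fin n), ∀ a ∈ A i, ∃ t ∈ R, t i = a)
    (hfun : ∀ t ∈ R, ∀ t' ∈ R, ∀ i : Fin n,
        (∀ j, j ≠ i → t j = t' j) → t = t')
    (s : Fin n → α) (hsdom : ∀ i, s i ∈ A i) (hs : s ∉ R)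
    (hmax : ∀ S : Set (Fin n → α), (∀ t ∈ S, ∀ i, t i ∈ A i) →
        PreservesSet f S → R ⊂ S → s ∈ S)
    (happ : ∀ i : Fin n, ∃ t ∈ R, ∀ j, j ≠ i → t j = s j) :
    ∀ i : Fin n, (B i).ncard = 2 := by
  classical
  intro j
  -- minority identities
  have m1 : ∀ x y : α, f x x y = y := fun x y => (hmin x y).1
  have m2 : ∀ x y : α, f x y x = y := fun x y => (hmin x y).2.1
  have m3 : ∀ x y : α, f y x x = y := fun x y => (hmin x y).2.2
  obtain ⟨x₀, y₀, hx₀y₀, hμ₀, hBeq⟩ := hB j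
  obtain ⟨hcongμ, hnontrivμ, hatomic⟩ := hμ j
  obtain ⟨hdomμ, hreflμ, hsymμ, htransμ, hpresμ⟩ := hcongμ
  -- the tuples t^i (named tt) witnessing criticality
  choose tt htR hts using happ
  have hbne : ∀ i, tt i i ≠ s i := by
    intro i he
    apply hs
    have hteq : tt i = s := funext fun a => by
      by_cases ha : a = i
      · subst ha; exact he
      · exact hts i a ha
    rw [← hteq]; exact htR i
  ------------------------------------------------------------------
  -- Lemma A : μ j (s j) (tt j j)
  ------------------------------------------------------------------
  have hA : μ j (s j) (tt j j) := by
    obtain ⟨c₀, d₀, hcd, hcdne⟩ := hnontrivμ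
    obtain ⟨r₀, hr₀R, hr₀j⟩ := hsub j c₀ (hdomμ _ _ hcd).1
    set S : Set (Fin n → α) :=
      {t | ∃ r ∈ R, (∀ a, a ≠ j → t a = r a) ∧ μ j (r j) (t j)} with hSdef
    have hRS : R ⊆ S := fun t ht => ⟨t, ht, fun _ _ => rfl, hreflμ _ (hdom t ht j)⟩
    have hsS : s ∈ S := by
      apply hmax S
      · rintro t ⟨r, hr, hagree, hμr⟩ i
        by_cases hij : i = j
        · subst hij; exact (hdomμ _ _ hμr).2
        · rw [hagree i hij]; exact hdom r hr i
      · rintro t1 t2 t3 ⟨r1, h1, e1, mm1⟩ ⟨r2, h2, e2, mm2⟩ ⟨r3, h3, e3, mm3⟩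
        exact ⟨fun i => f (r1 i) (r2 i) (r3 i), hinv r1 r2 r3 h1 h2 h3,
          fun a ha => by simp only; rw [e1 a ha, e2 a ha, e3 a ha],
          hpresμ _ _ _ _ _ _ mm1 mm2 mm3⟩
      · refine (Set.ssubset_iff_of_subset hRS).mpr
          ⟨fun a => if a = j then d₀ else r₀ a,
           ⟨r₀, hr₀R, fun a ha => if_neg ha, ?_⟩, ?_⟩
        · simp only [if_pos rfl]; rw [hr₀j]; exact hcd
        · intro hmem
          have heq := hfun _ hmem _ hr₀R j (fun a ha => if_neg ha)
          have hj' := congrFun heq j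
          simp only [eq_self_iff_true, if_true] at hj'
          exact hcdne (by rw [← hr₀j]; exact hj'.symm)
    obtain ⟨r, hrR, hragree, hrμ⟩ := hsS
    have hrt : r = tt j :=
      hfun r hrR (tt j) (htR j) j
        (fun a ha => ((hragree a ha).symm).trans (hts j a ha).symm)
    rw [hrt] at hrμ
    exact hsymμ _ _ hrμ
  ------------------------------------------------------------------
  -- Ω : the closure of R ∪ {s}
  ------------------------------------------------------------------
  set Ω : Set (Fin n → α) :=
    {v | ∀ S : Set (Fin n → α), (∀ t ∈ R, t ∈ S) → s ∈ S → PreservesSet f S → v ∈ S}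
    with hΩdef
  have hΩR : ∀ t ∈ R, t ∈ Ω := fun t ht S hR _ _ => hR t ht
  have hΩs : s ∈ Ω := fun _ _ hs' _ => hs'
  have hΩf : ∀ t1 t2 t3, t1 ∈ Ω → t2 ∈ Ω → t3 ∈ Ω →
      (fun i => f (t1 i) (t2 i) (t3 i)) ∈ Ω :=
    fun t1 t2 t3 h1 h2 h3 S hR hs' hp =>
      hp _ _ _ (h1 S hR hs' hp) (h2 S hR hs' hp) (h3 S hR hs' hp)
  -- every element of Ω has, in each direction m, a neighbour in R
  have hnbr : ∀ v ∈ Ω, ∀ m : Fin n, ∃ ρ, ρ ∈ R ∧ ∀ a, a ≠ m → v a = ρ a := by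
    intro v hv m
    refine hv {t | ∃ ρ, ρ ∈ R ∧ ∀ a, a ≠ m → t a = ρ a} ?_ ?_ ?_
    · exact fun t ht => ⟨t, ht, fun _ _ => rfl⟩
    · exact ⟨tt m, htR m, fun a ha => (hts m a ha).symm⟩
    · rintro t1 t2 t3 ⟨r1, h1, e1⟩ ⟨r2, h2, e2⟩ ⟨r3, h3, e3⟩
      exact ⟨fun i => f (r1 i) (r2 i) (r3 i), hinv _ _ _ h1 h2 h3,
        fun a ha => by simp only; rw [e1 a ha, e2 a ha, e3 a ha]⟩
  ------------------------------------------------------------------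
  -- E : the subalgebra of A j × A j generated by the diagonal and (s j, tt j j)
  ------------------------------------------------------------------
  set E : α → α → Prop := fun x y =>
    ∀ Q : α → α → Prop, (∀ a ∈ A j, Q a a) → Q (s j) (tt j j) →
      (∀ x1 y1 x2 y2 x3 y3, Q x1 y1 → Q x2 y2 → Q x3 y3 →
        Q (f x1 x2 x3) (f y1 y2 y3)) → Q x y
    with hEdef
  have hErefl : ∀ a ∈ A j, E a a := fun a ha _ hr _ _ => hr a ha
  have hEsb : E (s j) (tt j j) := fun _ _ hsb _ => hsb
  have hEf : ∀ x1 y1 x2 y2 x3 y3, E x1 y1 → E x2 y2 → E x3 y3 →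
      E (f x1 x2 x3) (f y1 y2 y3) :=
    fun x1 y1 x2 y2 x3 y3 h1 h2 h3 Q hr hsb hcl =>
      hcl _ _ _ _ _ _ (h1 Q hr hsb hcl) (h2 Q hr hsb hcl) (h3 Q hr hsb hcl)
  have hEμ : ∀ x y, E x y → μ j x y := fun x y h => h (μ j) hreflμ hA hpresμ
  have hEsub : ∀ x y, E x y → x ∈ A j ∧ y ∈ A j := by
    intro x y h
    refine h (fun x y => x ∈ A j ∧ y ∈ A j) (fun a ha => ⟨ha, ha⟩)
      ⟨hsdom j, hdom _ (htR j) j⟩ ?_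
    rintro x1 y1 x2 y2 x3 y3 ⟨a1, b1⟩ ⟨a2, b2⟩ ⟨a3, b3⟩
    constructor
    · rcases hcons x1 x2 x3 with h' | h' | h' <;> rw [h'] <;> assumption
    · rcases hcons y1 y2 y3 with h' | h' | h' <;> rw [h'] <;> assumption
  have hEsym : ∀ x y, E x y → E y x := by
    intro x y h
    refine h (fun x y => E y x) (fun a ha => hErefl a ha) ?_ ?_
    · -- E (tt j j) (s j)
      have h1 := hEf (s j) (tt j j) (tt j j) (tt j j) (s j) (s j) hEsb
        (hErefl _ (hdom _ (htR j) j)) (hErefl _ (hsdom j))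
      rwa [m2 (s j) (tt j j), m1 (tt j j) (s j)] at h1
    · intro x1 y1 x2 y2 x3 y3 h1 h2 h3
      exact hEf y1 x1 y2 x2 y3 x3 h1 h2 h3
  -- realization of E-pairs
  have hreal : ∀ x y, E x y → ∃ w ρ, w ∈ Ω ∧ ρ ∈ R ∧
      (∀ a, a ≠ j → w a = ρ a) ∧ w j = x ∧ ρ j = y := by
    intro x y h
    refine h (fun x y => ∃ w ρ, w ∈ Ω ∧ ρ ∈ R ∧
      (∀ a, a ≠ j → w a = ρ a) ∧ w j = x ∧ ρ j = y) ?_ ?_ ?_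
    · intro a ha
      obtain ⟨r, hr, hrj⟩ := hsub j a ha
      exact ⟨r, r, hΩR r hr, hr, fun _ _ => rfl, hrj, hrj⟩
    · exact ⟨s, tt j, hΩs, htR j, fun a ha => (hts j a ha).symm, rfl, rfl⟩
    · rintro x1 y1 x2 y2 x3 y3 ⟨w1, ρ1, hw1, hρ1, e1, a1, b1⟩
        ⟨w2, ρ2, hw2, hρ2, e2, a2, b2⟩ ⟨w3, ρ3, hw3, hρ3, e3, a3, b3⟩
      refine ⟨fun i => f (w1 i) (w2 i) (w3 i), fun i => f (ρ1 i) (ρ2 i) (ρ3 i),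
        hΩf _ _ _ hw1 hw2 hw3, hinv _ _ _ hρ1 hρ2 hρ3, ?_, ?_, ?_⟩
      · intro a ha; simp only; rw [e1 a ha, e2 a ha, e3 a ha]
      · simp only; rw [a1, a2, a3]
      · simp only; rw [b1, b2, b3]
  ------------------------------------------------------------------
  -- uniqueness of E-partners
  ------------------------------------------------------------------
  have huni : ∀ p q q', E p q → E p q' → p ≠ q → p ≠ q' → q = q' := by
    intro p q q' hpq hpq' hnpq hnpq'
    by_contra hne
    obtain ⟨w, ρ, hwΩ, hρR, hagree, hwj, hρj⟩ := hreal p q hpq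
    obtain ⟨w', ρ', hw'Ω, hρ'R, hagree', hw'j, hρ'j⟩ := hreal p q' hpq'
    have hwR : w ∉ R := by
      intro hw
      have hwρ := hfun w hw ρ hρR j hagree
      exact hnpq (by rw [← hwj, ← hρj, hwρ])
    -- the tuple T : like w but with q' in coordinate j
    set T : Fin n → α := fun a => f (w' a) (ρ' a) (w a) with hTdef
    have hTΩ : T ∈ Ω := hΩf w' ρ' w hw'Ω (hΩR ρ' hρ'R) hwΩ
    have hTa : ∀ a, a ≠ j → T a = w a := by
      intro a ha
      show f (w' a) (ρ' a) (w a) = w a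
      rw [← hagree' a ha]; exact m1 (w' a) (w a)
    have hTj : T j = q' := by
      show f (w' j) (ρ' j) (w j) = q'
      rw [hwj, hw'j, hρ'j]; exact m2 p q'
    have hTR : T ∉ R := by
      intro hT
      have hTρ := hfun T hT ρ hρR j (fun a ha => (hTa a ha).trans (hagree a ha))
      have hc := congrFun hTρ j
      rw [hTj, hρj] at hc
      exact hne hc.symm
    -- the neighbour family of w
    choose ν hνR hν₀ using hnbr w hwΩ
    have hν' : ∀ m a, a ≠ m → ν m a = w a := fun m a ha => (hν₀ m a ha).symm
    have hδ : ∀ m, ν m m ≠ w m := by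
      intro m he
      apply hwR
      have hwe : w = ν m := funext fun a => by
        by_cases ha : a = m
        · rw [ha]; exact he.symm
        · exact (hν' m a ha).symm
      rw [hwe]; exact hνR m
    -- the neighbour family of T
    choose ζ hζR hζ₀ using hnbr T hTΩ
    have hζ' : ∀ m a, a ≠ m → ζ m a = T a := fun m a ha => (hζ₀ m a ha).symm
    have hζj : ∀ m, m ≠ j → ζ m j = q' := fun m hm => (hζ' m j (Ne.symm hm)).trans hTj
    have hζw : ∀ m a, a ≠ m → a ≠ j → ζ m a = w a :=
      fun m a ham haj => (hζ' m a ham).trans (hTa a haj)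
    have hdw : ∀ m, m ≠ j → ζ m m ≠ w m := by
      intro m hmj he
      apply hTR
      have hTe : T = ζ m := funext fun a => by
        by_cases ha : a = m
        · rw [ha, hTa m hmj]; exact he.symm
        · exact (hζ' m a ha).symm
      rw [hTe]; exact hζR m
    have hdδ : ∀ m, m ≠ j → ζ m m ≠ ν m m := by
      intro m hmj he
      have heq : ζ m = ν m := by
        apply hfun _ (hζR m) _ (hνR m) j
        intro a haj
        by_cases ham : a = m
        · subst ham; exact he
        · rw [hζw m a ham haj, hν' m a ham]
      have hc := congrFun heq j
      rw [hζj m hmj, hν' m j (Ne.symm hmj), hwj] at hc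
      exact hnpq' hc.symm
    -- two auxiliary coordinates
    obtain ⟨k, l, hkj, hlj, hkl⟩ := stmt15_exists_two_ne hn j
    -- two-sided swap identity, centered at w
    have hLB : ∀ (a i2 k2 : Fin n), i2 ≠ a → k2 ≠ a → i2 ≠ k2 → ∀ r, r ∈ R →
        f (r a) (w a) (ν a a) = f (r a) (ν a a) (w a) := by
      intro a i2 k2 hia hka hik r hrR
      have hq1R : (fun m => f (r m) (ν i2 m) (ν a m)) ∈ R :=
        hinv _ _ _ hrR (hνR i2) (hνR a)
      have hq2R : (fun m => f (r m) (ν i2 m) (ν k2 m)) ∈ R :=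
        hinv _ _ _ hrR (hνR i2) (hνR k2)
      have hq3R : (fun m => f (r m) (ν a m) (ν k2 m)) ∈ R :=
        hinv _ _ _ hrR (hνR a) (hνR k2)
      have hDR : (fun m => f (r m) (f (r m) (ν i2 m) (ν a m)) (f (r m) (ν i2 m) (ν k2 m))) ∈ R :=
        hinv _ _ _ hrR hq1R hq2R
      have hDq3 : (fun m => f (r m) (f (r m) (ν i2 m) (ν a m)) (f (r m) (ν i2 m) (ν k2 m)))
          = (fun m => f (r m) (ν a m) (ν k2 m)) := by
        apply hfun _ hDR _ hq3R a
        intro mm hmm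
        by_cases hmi : mm = i2
        · subst hmi
          rw [hν' a mm hia, hν' k2 mm hik]
          rw [m3 (f (r mm) (ν mm mm) (w mm)) (r mm), m3 (w mm) (r mm)]
        · by_cases hmk : mm = k2
          · subst hmk
            rw [hν' i2 mm (Ne.symm hik), hν' a mm hka]
            rw [m3 (w mm) (r mm), m1 (r mm) (f (r mm) (w mm) (ν mm mm))]
          · rw [hν' i2 mm hmi, hν' a mm hmm, hν' k2 mm hmk]
            rw [m3 (w mm) (r mm), m1 (r mm) (r mm)]
      have hc := congrFun hDq3 a
      rw [hν' i2 a (Ne.symm hia), hν' k2 a (Ne.symm hka)] at hc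
      rw [m3 (w a) (r a), m2 (r a) (f (r a) (w a) (ν a a))] at hc
      exact hc
    -- the tuple π and π'
    have hπR : (fun m => f (ζ k m) (ζ l m) (ν j m)) ∈ R :=
      hinv _ _ _ (hζR k) (hζR l) (hνR j)
    have hπ'R : (fun m => f (f (ζ k m) (ζ l m) (ν j m)) (ν j m) (ν k m)) ∈ R :=
      hinv _ _ _ hπR (hνR j) (hνR k)
    have hπj : f (ζ k j) (ζ l j) (ν j j) = ν j j := by
      rw [hζj k hkj, hζj l hlj]; exact m1 q' (ν j j)
    have hπk : f (ζ k k) (ζ l k) (ν j k) = ζ k k := by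
      rw [hζw l k hkl hkj, hν' j k hkj]; exact m3 (w k) (ζ k k)
    have hπl : f (ζ k l) (ζ l l) (ν j l) = ζ l l := by
      rw [hζw k l (Ne.symm hkl) hlj, hν' j l hlj]; exact m2 (w l) (ζ l l)
    have hπo : ∀ m, m ≠ j → m ≠ k → m ≠ l → f (ζ k m) (ζ l m) (ν j m) = w m := by
      intro m hmj hmk hml
      rw [hζw k m hmk hmj, hζw l m hml hmj, hν' j m hmj]
      exact m1 (w m) (w m)
    have hπ'j : f (f (ζ k j) (ζ l j) (ν j j)) (ν j j) (ν k j) = w j := by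
      rw [hπj, hν' k j (Ne.symm hkj)]; exact m1 (ν j j) (w j)
    have hπ'l : f (f (ζ k l) (ζ l l) (ν j l)) (ν j l) (ν k l) = ζ l l := by
      rw [hπl, hν' j l hlj, hν' k l (Ne.symm hkl)]; exact m3 (w l) (ζ l l)
    have hπ'o : ∀ m, m ≠ j → m ≠ k → m ≠ l →
        f (f (ζ k m) (ζ l m) (ν j m)) (ν j m) (ν k m) = w m := by
      intro m hmj hmk hml
      rw [hπo m hmj hmk hml, hν' j m hmj, hν' k m hmk]
      exact m1 (w m) (w m)
    have hπ'k : f (f (ζ k k) (ζ l k) (ν j k)) (ν j k) (ν k k) = f (ζ k k) (w k) (ν k k) := by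
      rw [hπk, hν' j k hkj]
    have h2 : f (ζ k k) (w k) (ν k k) = ζ k k := by
      rcases hcons (ζ k k) (w k) (ν k k) with hc | hc | hc
      · exact hc
      · exfalso
        have heq : (fun m => f (f (ζ k m) (ζ l m) (ν j m)) (ν j m) (ν k m)) = ν l := by
          apply hfun _ hπ'R _ (hνR l) l
          intro a hal
          by_cases haj : a = j
          · subst haj; rw [hπ'j, hν' l a (Ne.symm hlj)]
          · by_cases hak : a = k
            · subst hak; rw [hπ'k, hc, hν' l a hkl]
            · rw [hπ'o a haj hak hal, hν' l a hal]
        have hcf := congrFun heq l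
        rw [hπ'l] at hcf
        exact hdδ l hlj hcf
      · exfalso
        have heq : (fun m => f (f (ζ k m) (ζ l m) (ν j m)) (ν j m) (ν k m)) = ν k := by
          apply hfun _ hπ'R _ (hνR k) l
          intro a hal
          by_cases haj : a = j
          · subst haj; rw [hπ'j, hν' k a (Ne.symm hkj)]
          · by_cases hak : a = k
            · subst hak; rw [hπ'k, hc]
            · rw [hπ'o a haj hak hal, hν' k a hak]
        have hcf := congrFun heq l
        rw [hπ'l, hν' k l (Ne.symm hkl)] at hcf
        exact hdw l hlj hcf
    -- the tuple π'' and the identity h3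
    have hπ''R : (fun m => f (ζ k m) (ν k m) (ν j m)) ∈ R :=
      hinv _ _ _ (hζR k) (hνR k) (hνR j)
    have hπ''j : f (ζ k j) (ν k j) (ν j j) = f q' (w j) (ν j j) := by
      rw [hζj k hkj, hν' k j (Ne.symm hkj)]
    have hπ''k : f (ζ k k) (ν k k) (ν j k) = ζ k k := by
      rw [hν' j k hkj]
      have hL := hLB k j l (Ne.symm hkj) (Ne.symm hkl) (Ne.symm hlj) (ζ k) (hζR k)
      rw [← hL]; exact h2
    have hπ''o : ∀ m, m ≠ j → m ≠ k → f (ζ k m) (ν k m) (ν j m) = w m := by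
      intro m hmj hmk
      rw [hζw k m hmk hmj, hν' k m hmk, hν' j m hmj]
      exact m1 (w m) (w m)
    have h3 : f q' (w j) (ν j j) = q' := by
      rcases hcons q' (w j) (ν j j) with hc | hc | hc
      · exact hc
      · exfalso
        have heq : (fun m => f (ζ k m) (ν k m) (ν j m)) = ν k := by
          apply hfun _ hπ''R _ (hνR k) k
          intro a hak
          by_cases haj : a = j
          · subst haj; rw [hπ''j, hc, hν' k a (Ne.symm hkj)]
          · rw [hπ''o a haj hak, hν' k a hak]
        have hcf := congrFun heq k
        rw [hπ''k] at hcf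
        exact hdδ k hkj hcf
      · exfalso
        have heq : (fun m => f (ζ k m) (ν k m) (ν j m)) = ν j := by
          apply hfun _ hπ''R _ (hνR j) k
          intro a hak
          by_cases haj : a = j
          · subst haj; rw [hπ''j, hc]
          · rw [hπ''o a haj hak, hν' j a haj]
        have hcf := congrFun heq k
        rw [hπ''k, hν' j k hkj] at hcf
        exact hdw k hkj hcf
    -- final contradiction
    have hYR : (fun m => f (ζ k m) (ν j m) (ν l m)) ∈ R :=
      hinv _ _ _ (hζR k) (hνR j) (hνR l)
    have hYζ : (fun m => f (ζ k m) (ν j m) (ν l m)) = ζ k := by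
      apply hfun _ hYR _ (hζR k) l
      intro a hal
      by_cases haj : a = j
      · subst haj
        rw [hν' l a (Ne.symm hlj), hζj k hkj]
        have hL := hLB a k l hkj hlj hkl (ζ k) (hζR k)
        rw [hζj k hkj] at hL
        rw [← hL]; exact h3
      · by_cases hak : a = k
        · subst hak
          rw [hν' j a hkj, hν' l a hkl]
          exact m3 (w a) (ζ a a)
        · rw [hζw k a hak haj, hν' j a haj, hν' l a hal]
          exact m1 (w a) (w a)
    have hcf := congrFun hYζ l
    rw [hζw k l (Ne.symm hkl) hlj, hν' j l hlj, m1 (w l) (ν l l)] at hcf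
    exact hδ l hcf
  ------------------------------------------------------------------
  -- E is a congruence on A j; by atomicity E = μ j; conclude
  ------------------------------------------------------------------
  have htransE : ∀ x y z, E x y → E y z → E x z := by
    intro x y z hxy hyz
    by_cases h1 : x = y
    · subst h1; exact hyz
    · by_cases h2 : y = z
      · subst h2; exact hxy
      · have h3 : x = z := huni y x z (hEsym x y hxy) hyz (fun h => h1 h.symm) h2
        rw [h3]
        exact hErefl z (hEsub y z hyz).2
  have hiff : ∀ x y, E x y ↔ μ j x y :=
    hatomic E ⟨hEsub, hErefl, hEsym, htransE, hEf⟩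
      ⟨s j, tt j j, hEsb, fun h => hbne j h.symm⟩ (fun x y h => hEμ x y h)
  have hsetB : B j = {x₀, y₀} := by
    rw [hBeq]
    ext z
    simp only [Set.mem_setOf_eq, Set.mem_insert_iff, Set.mem_singleton_iff]
    constructor
    · intro hz
      by_cases hzx : z = x₀
      · exact Or.inl hzx
      · exact Or.inr ((huni x₀ y₀ z ((hiff x₀ y₀).mpr hμ₀) ((hiff x₀ z).mpr hz)
          hx₀y₀ (fun h => hzx h.symm)).symm)
    · rintro (rfl | rfl)
      · exact hreflμ _ (hdomμ _ _ hμ₀).1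
      · exact hμ₀
  rw [hsetB]
  exact Set.ncard_pair hx₀y₀
end

section
/- Let A be a finite set with a conservative minority operation f, and let A₁,…,Aₙ ⊆ A be subsets such that each subalgebra (A_i;f) is subdirectly irreducible with monolith μ_i whose nontrivial block is a two-element set {a_i, b_i}. Suppose R ⊆ A₁ × ⋯ × Aₙ is invariant under the coordinatewise application of f and satisfies: (1) R is functional, and (2) there are bijections ℓ_i : {a_i,b_i} → {0,1} such that R ∩ ({a₁,b₁} × ⋯ × {aₙ,bₙ}) = {(c₁,…,cₙ) : c_i ∈ {a_i,b_i} for all i and ℓ₁(c₁) + ⋯ + ℓₙ(cₙ) ≡ 1 (mod 2)}. Then every tuple (c₁,…,cₙ) ∈ R satisfies: if c_i ∈ {a_i, b_i} for some i, then c_j ∈ {a_j, b_j} for every j ∈ {1,…,n}. -/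
/-- Tuples of a functional invariant relation whose restriction to the product
of the (two-element) monolith blocks is the solution set of the `ℤ₂`-linear
equation `x₁ + ⋯ + xₙ = 1` do not cross the boundary of the blocks. -/
theorem stmt_16 {α : Type*} [Fintype α] (f : α → α → α → α)
    (hcons : IsConservativeOp f) (hmin : IsMinorityOp f)
    (n : ℕ) (A : Fin n → Set α) (a b : Fin n → α)
    (haA : ∀ i, a i ∈ A i) (hbA : ∀ i, b i ∈ A i) (hab : ∀ i, a i ≠ b i)
    (hSI : ∀ i, IsSIOn f (A i))
    (hblock : ∀ (i : Fin n) (μ : α → α → Prop), IsAtomicCongOn f (A i) μ →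
        μ (a i) (b i) ∧ ∀ x, μ (a i) x → x = a i ∨ x = b i)
    (R : Set (Fin n → α))
    (hdom : ∀ t ∈ R, ∀ i, t i ∈ A i)
    (hinv : PreservesSet f R)
    (hfun : ∀ t ∈ R, ∀ t' ∈ R, ∀ i : Fin n,
        (∀ j, j ≠ i → t j = t' j) → t = t')
    (ℓ : Fin n → α → ZMod 2)
    (hℓ : ∀ i, ℓ i (a i) ≠ ℓ i (b i))
    (hlin : ∀ t : Fin n → α, (∀ i, t i = a i ∨ t i = b i) →
        (t ∈ R ↔ (∑ i, ℓ i (t i)) = 1)) :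
    ∀ t ∈ R, (∃ i, t i = a i ∨ t i = b i) →
      ∀ j : Fin n, t j = a j ∨ t j = b j := by
  intro t ht hex j
  obtain ⟨k, hk⟩ := hex
  by_cases hjk : j = k
  · subst hjk; exact hk
  classical
  have z1 : ∀ x y : ZMod 2, x ≠ y → x + y = 1 := by decide
  have z0 : ∀ x : ZMod 2, x ≠ 1 → 1 + x = 1 := by decide
  have hsum : ∀ g h : Fin n → ZMod 2, (∀ i, i ≠ j → i ≠ k → g i = h i) →
      ∑ i, g i = ((g j + h j) + (g k + h k)) + ∑ i, h i := by
    intro g h hgh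
    have h1 : ∑ i, g i + ∑ i, h i
        = ∑ i ∈ ({j, k} : Finset (Fin n)), (g i + h i) := by
      rw [← Finset.sum_add_distrib]
      refine (Finset.sum_subset (Finset.subset_univ _) ?_).symm
      intro i _ hi
      simp only [Finset.mem_insert, Finset.mem_singleton, not_or] at hi
      rw [hgh i hi.1 hi.2, CharTwo.add_self_eq_zero]
    rw [Finset.sum_pair hjk] at h1
    calc ∑ i, g i = (∑ i, g i + ∑ i, h i) + ∑ i, h i := by
          rw [add_assoc, CharTwo.add_self_eq_zero, add_zero]
      _ = ((g j + h j) + (g k + h k)) + ∑ i, h i := by rw [h1]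
  have key : ∀ (G H : Fin n → α) (x y z w : α),
      (∀ i, i ≠ j → i ≠ k → G i = H i) → G j = x → H j = y → G k = z → H k = w →
      ∑ i, ℓ i (G i) = ((ℓ j x + ℓ j y) + (ℓ k z + ℓ k w)) + ∑ i, ℓ i (H i) := by
    intro G H x y z w hGH hx hy hz hw
    subst hx; subst hy; subst hz; subst hw
    exact hsum (fun i => ℓ i (G i)) (fun i => ℓ i (H i))
      (fun i h1 h2 => congrArg (ℓ i) (hGH i h1 h2))
  -- choose v ∈ {a k, b k} so that the tuple (a updated at k to v) has sum 1
  obtain ⟨v, hv, hvsum⟩ :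
      ∃ v, (v = a k ∨ v = b k) ∧
        (∑ i, ℓ i (if i = k then v else a i)) = 1 := by
    by_cases hSa : (∑ i, ℓ i (if i = k then (a k) else a i)) = 1
    · exact ⟨a k, Or.inl rfl, hSa⟩
    · refine ⟨b k, Or.inr rfl, ?_⟩
      have hd := key (fun i => if i = k then b k else a i)
        (fun i => if i = k then a k else a i) (a j) (a j) (b k) (a k)
        (fun i _ hik => by simp [hik]) (by simp [hjk]) (by simp [hjk])
        (by simp) (by simp)
      rw [CharTwo.add_self_eq_zero, z1 _ _ (Ne.symm (hℓ k)), zero_add] at hd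
      rw [hd]
      exact z0 _ hSa
  set s : Fin n → α := fun i => if i = k then v else a i with hsdef
  set v' : α := if v = a k then b k else a k with hv'def
  have hv'cases : (v = a k ∧ v' = b k) ∨ (v = b k ∧ v' = a k) := by
    rcases hv with h | h
    · exact Or.inl ⟨h, by rw [hv'def, if_pos h]⟩
    · refine Or.inr ⟨h, ?_⟩
      rw [hv'def, if_neg (by rw [h]; exact Ne.symm (hab k))]
  have hvv' : v ≠ v' := by
    rcases hv'cases with ⟨h1, h2⟩ | ⟨h1, h2⟩ <;> rw [h1, h2]
    · exact hab k
    · exact Ne.symm (hab k)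
  set s' : Fin n → α := fun i => if i = j then b j else if i = k then v' else a i
    with hs'def
  have hsj : s j = a j := by simp [hsdef, hjk]
  have hsk : s k = v := by simp [hsdef]
  have hsi : ∀ i, i ≠ k → s i = a i := fun i hik => by simp [hsdef, hik]
  have hs'j : s' j = b j := by simp [hs'def]
  have hs'k : s' k = v' := by simp [hs'def, Ne.symm hjk]
  have hs'i : ∀ i, i ≠ j → i ≠ k → s' i = a i := fun i hij hik => by
    simp [hs'def, hij, hik]
  have hssum1 : ∑ i, ℓ i (s i) = 1 := by simpa [hsdef] using hvsum
  have hscube : ∀ i, s i = a i ∨ s i = b i := by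
    intro i
    by_cases h : i = k
    · subst h; rw [hsk]; exact hv
    · rw [hsi i h]; exact Or.inl rfl
  have hs'cube : ∀ i, s' i = a i ∨ s' i = b i := by
    intro i
    by_cases h1 : i = j
    · subst h1; rw [hs'j]; exact Or.inr rfl
    by_cases h2 : i = k
    · subst h2; rw [hs'k]
      rcases hv'cases with ⟨_, h⟩ | ⟨_, h⟩
      · exact Or.inr h
      · exact Or.inl h
    · rw [hs'i i h1 h2]; exact Or.inl rfl
  have hℓvv' : ℓ k v' ≠ ℓ k v := by
    rcases hv'cases with ⟨h1, h2⟩ | ⟨h1, h2⟩ <;> rw [h1, h2]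
    · exact Ne.symm (hℓ k)
    · exact hℓ k
  have hs'sum1 : ∑ i, ℓ i (s' i) = 1 := by
    have hd := key s' s (b j) (a j) v' v
      (fun i h1 h2 => by rw [hs'i i h1 h2, hsi i h2]) hs'j hsj hs'k hsk
    rw [hd, hssum1, z1 _ _ (Ne.symm (hℓ j)), z1 _ _ hℓvv']
    decide
  have hsR : s ∈ R := (hlin s hscube).mpr hssum1
  have hs'R : s' ∈ R := (hlin s' hs'cube).mpr hs'sum1
  set u : Fin n → α := fun i => f (t i) (s i) (s' i) with hudef
  have huR : u ∈ R := hinv t s s' ht hsR hs'R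
  have hui : ∀ i, i ≠ j → i ≠ k → u i = t i := by
    intro i hij hik
    rw [hudef]
    dsimp only
    rw [hsi i hik, hs'i i hij hik]
    exact (hmin (a i) (t i)).2.2
  have htkv : t k = v ∨ t k = v' := by
    rcases hv'cases with ⟨h1, h2⟩ | ⟨h1, h2⟩ <;> rw [h1, h2]
    · exact hk
    · exact hk.symm
  have huk : (t k = v ∧ u k = v') ∨ (t k = v' ∧ u k = v) := by
    rcases htkv with h | h
    · refine Or.inl ⟨h, ?_⟩
      rw [hudef]; dsimp only
      rw [hsk, hs'k, h]
      exact (hmin v v').1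
    · refine Or.inr ⟨h, ?_⟩
      rw [hudef]; dsimp only
      rw [hsk, hs'k, h]
      exact (hmin v' v).2.1
  have hukne : u k ≠ t k := by
    rcases huk with ⟨h1, h2⟩ | ⟨h1, h2⟩ <;> rw [h1, h2]
    · exact Ne.symm hvv'
    · exact hvv'
  have huje : u j = f (t j) (a j) (b j) := by
    rw [hudef]; dsimp only; rw [hsj, hs'j]
  have huj : u j = a j ∨ u j = b j := by
    have hne : u j ≠ t j := by
      intro h
      have htu : t = u := by
        refine hfun t ht u huR k (fun i hik => ?_)
        by_cases hij : i = j
        · subst hij; exact h.symm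
        · exact (hui i hij hik).symm
      exact hukne (by rw [htu])
    rcases hcons (t j) (a j) (b j) with h | h | h
    · exact absurd (huje.trans h) hne
    · exact Or.inl (huje.trans h)
    · exact Or.inr (huje.trans h)
  set w : Fin n → α := fun i => f (u i) (s i) (s' i) with hwdef
  have hwR : w ∈ R := hinv u s s' huR hsR hs'R
  have hwi : ∀ i, i ≠ j → i ≠ k → w i = t i := by
    intro i hij hik
    rw [hwdef]; dsimp only
    rw [hsi i hik, hs'i i hij hik, hui i hij hik]
    exact (hmin (a i) (t i)).2.2
  have hwk : w k = t k := by
    rcases huk with ⟨h1, h2⟩ | ⟨h1, h2⟩ <;>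
      (rw [hwdef]; dsimp only; rw [hsk, hs'k, h2, h1])
    · exact (hmin v' v).2.1
    · exact (hmin v v').1
  have hwj : w j = a j ∨ w j = b j := by
    have hwje : w j = f (u j) (a j) (b j) := by
      rw [hwdef]; dsimp only; rw [hsj, hs'j]
    rcases huj with h | h
    · rw [hwje, h]; exact Or.inr ((hmin (a j) (b j)).1)
    · rw [hwje, h]; exact Or.inl ((hmin (b j) (a j)).2.1)
  have htw : t = w := by
    refine hfun t ht w hwR j (fun i hij => ?_)
    by_cases hik : i = k
    · subst hik; exact hwk.symm
    · exact (hwi i hij hik).symm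
  rw [htw]
  exact hwj
end
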